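/- arXiv:2308.07920 — 2 statements merged into one kernel-verified Lean document; each statement's English description precedes it below -/
import Mathlib

section
/- Let d ≥ 2 and let μ be a probability measure on {0,1}^{ℤ^d} (with the product σ-algebra) that is positively associated and invariant under all translations of ℤ^d and under all linear isometries of ℤ^d generated by coordinate permutations and coordinate sign flips. Suppose that κ := inf_{r ≥ 1} μ({ω : some ω-open connected set intersects both B_r and ∂B_{2r}}) > 0. Then there exist a constant C < ∞ depending only on d and a constant c(κ) > 0 depending only on d and κ such that for every integer r ≥ 1 and all x, y ∈ B_r, μ({ω : x is connected to y by an ω-open path inside B_{2r}}) ≥ c(κ)·r^{−C}. -/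
open MeasureTheory

/-- Nearest-neighbor adjacency on `ℤ^d`: Euclidean distance one. -/
def nnAdj {d : ℕ} (x y : Fin d → ℤ) : Prop := ∑ i, (x i - y i) ^ 2 = 1

/-- The box `B_r = ([-r,r] ∩ ℤ)^d`. -/
def latBox (d r : ℕ) : Set (Fin d → ℤ) := {x | ∀ i, |x i| ≤ (r : ℤ)}

/-- The set `∂B_r = {x ∈ ℤ^d : |x|_∞ = r}`. -/
def latSphere (d r : ℕ) : Set (Fin d → ℤ) :=
  {x | (∀ i, |x i| ≤ (r : ℤ)) ∧ ∃ i, |x i| = (r : ℤ)}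

/-- The set of `ω`-open sites. -/
def openSites {d : ℕ} (ω : (Fin d → ℤ) → Bool) : Set (Fin d → ℤ) := {x | ω x = true}

/-- `x` and `y` are joined by a nearest-neighbor path lying in `A`. -/
def LatJoined {d : ℕ} (A : Set (Fin d → ℤ)) (x y : Fin d → ℤ) : Prop :=
  ∃ l : List (Fin d → ℤ), l.Chain' nnAdj ∧ l.head? = some x ∧ l.getLast? = some y ∧
    ∀ z ∈ l, z ∈ A

/-- A set is connected if any two of its points are joined by a path inside it. -/
def LatConn {d : ℕ} (A : Set (Fin d → ℤ)) : Prop := ∀ x ∈ A, ∀ y ∈ A, LatJoined A x y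

/-- The event that `x` is connected to `y` by an `ω`-open path inside `A`. -/
def connEvent {d : ℕ} (A : Set (Fin d → ℤ)) (x y : Fin d → ℤ) :
    Set ((Fin d → ℤ) → Bool) :=
  {ω | LatJoined (A ∩ openSites ω) x y}

/-- The event that some `ω`-open connected set intersects both `B_r` and `∂B_{2r}`. -/
def crossEvent (d r : ℕ) : Set ((Fin d → ℤ) → Bool) :=
  {ω | ∃ A : Set (Fin d → ℤ), A ⊆ openSites ω ∧ LatConn A ∧
    (A ∩ latBox d r).Nonempty ∧ (A ∩ latSphere d (2 * r)).Nonempty}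

/-- Positive association: `μ(E ∩ F) ≥ μ(E)μ(F)` for increasing events `E`, `F`. -/
def PosAssoc {d : ℕ} (μ : Measure ((Fin d → ℤ) → Bool)) : Prop :=
  ∀ E F : Set ((Fin d → ℤ) → Bool), MeasurableSet E → MeasurableSet F →
    (∀ ω ω' : (Fin d → ℤ) → Bool, (∀ x, ω x ≤ ω' x) → ω ∈ E → ω' ∈ E) →
    (∀ ω ω' : (Fin d → ℤ) → Bool, (∀ x, ω x ≤ ω' x) → ω ∈ F → ω' ∈ F) →
    μ E * μ F ≤ μ (E ∩ F)

namespace TP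
variable {d : ℕ}

lemma nnAdj_coord_le {x y : Fin d → ℤ} (h : nnAdj x y) (i : Fin d) : |x i - y i| ≤ 1 := by
  have h1 : (x i - y i) ^ 2 ≤ 1 := by
    rw [← h]
    exact Finset.single_le_sum (f := fun j => (x j - y j) ^ 2)
      (fun j _ => sq_nonneg _) (Finset.mem_univ i)
  exact (sq_le_one_iff_abs_le_one _).mp h1

lemma latJoined_mono {A B : Set (Fin d → ℤ)} (h : A ⊆ B) {x y : Fin d → ℤ}
    (hj : LatJoined A x y) : LatJoined B x y := by
  obtain ⟨l, h1, h2, h3, h4⟩ := hj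
  exact ⟨l, h1, h2, h3, fun z hz => h (h4 z hz)⟩

lemma latJoined_refl {A : Set (Fin d → ℤ)} {x : Fin d → ℤ} (hx : x ∈ A) :
    LatJoined A x x :=
  ⟨[x], by show List.IsChain _ _; simp [List.isChain_singleton], rfl, rfl, by simpa using hx⟩

lemma latJoined_trans {A : Set (Fin d → ℤ)} {x y z : Fin d → ℤ}
    (h1 : LatJoined A x y) (h2 : LatJoined A y z) : LatJoined A x z := by
  obtain ⟨l1, c1, hh1, hl1, hm1⟩ := h1
  obtain ⟨l2, c2, hh2, hl2, hm2⟩ := h2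
  cases l2 with
  | nil => simp at hh2
  | cons a t2 =>
    have ha : a = y := by simpa using hh2
    subst ha
    cases t2 with
    | nil =>
      have hz : a = z := by simpa using hl2
      subst hz
      exact ⟨l1, c1, hh1, hl1, hm1⟩
    | cons b t2' =>
      refine ⟨l1 ++ b :: t2', ?_, ?_, ?_, ?_⟩
      · show List.IsChain _ _; rw [List.isChain_append]
        refine ⟨c1, (List.isChain_cons_cons.mp c2).2, ?_⟩
        intro u hu v hv
        rw [hl1] at hu
        simp only [Option.mem_some_iff, List.head?_cons] at hu hv
        subst hu; subst hv
        exact (List.isChain_cons_cons.mp c2).1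
      · cases l1 with
        | nil => simp at hh1
        | cons c t => simpa using hh1
      · rw [List.getLast?_append]
        have hgl : (b :: t2').getLast? = some z := by
          rw [← hl2]; rfl
        simp [hgl]
      · intro w hw
        rcases List.mem_append.mp hw with h | h
        · exact hm1 w h
        · exact hm2 w (List.mem_cons_of_mem _ h)

/-- equivariance of LatJoined under an adjacency-preserving bijection -/
lemma latJoined_map (g : (Fin d → ℤ) ≃ (Fin d → ℤ))
    (hadj : ∀ a b, nnAdj a b → nnAdj (g a) (g b))
    {A : Set (Fin d → ℤ)} {x y : Fin d → ℤ} (h : LatJoined A x y) :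
    LatJoined (g '' A) (g x) (g y) := by
  obtain ⟨l, c, hh, hl, hm⟩ := h
  refine ⟨l.map g, ?_, ?_, ?_, ?_⟩
  · show List.IsChain _ _; rw [List.isChain_map]
    exact List.IsChain.imp (fun a b hab => hadj a b hab) c
  · rw [List.head?_map, hh]; rfl
  · rw [List.getLast?_map, hl]; rfl
  · intro w hw
    obtain ⟨u, hu, rfl⟩ := List.mem_map.mp hw
    exact ⟨u, hm u hu, rfl⟩

lemma connEvent_mono {A B : Set (Fin d → ℤ)} (h : A ⊆ B) (x y : Fin d → ℤ) :
    connEvent A x y ⊆ connEvent B x y := fun ω hω =>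
  latJoined_mono (Set.inter_subset_inter_left _ h) hω

lemma connEvent_increasing {A : Set (Fin d → ℤ)} {x y : Fin d → ℤ}
    {ω ω' : (Fin d → ℤ) → Bool} (hle : ∀ z, ω z ≤ ω' z)
    (h : ω ∈ connEvent A x y) : ω' ∈ connEvent A x y := by
  refine latJoined_mono (Set.inter_subset_inter_right _ ?_) h
  intro z hz
  have := hle z
  simp only [openSites, Set.mem_setOf_eq] at hz ⊢
  rw [hz] at this
  exact le_antisymm (by simp) this  -- ω' z = true

lemma connEvent_measurable (A : Set (Fin d → ℤ)) (x y : Fin d → ℤ) :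
    MeasurableSet (connEvent A x y) := by
  have : connEvent A x y =
      ⋃ l ∈ {l : List (Fin d → ℤ) | l.Chain' nnAdj ∧ l.head? = some x ∧
        l.getLast? = some y ∧ ∀ z ∈ l, z ∈ A},
        {ω : (Fin d → ℤ) → Bool | ∀ z ∈ l, ω z = true} := by
    ext ω
    simp only [connEvent, LatJoined, Set.mem_setOf_eq, Set.mem_iUnion]
    constructor
    · rintro ⟨l, c, hh, hl, hm⟩
      exact ⟨l, ⟨c, hh, hl, fun z hz => (hm z hz).1⟩, fun z hz => (hm z hz).2⟩
    · rintro ⟨l, ⟨c, hh, hl, hm⟩, ho⟩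
      exact ⟨l, c, hh, hl, fun z hz => ⟨hm z hz, ho z hz⟩⟩
  rw [this]
  refine MeasurableSet.biUnion (Set.to_countable _) (fun l _ => ?_)
  have : {ω : (Fin d → ℤ) → Bool | ∀ z ∈ l, ω z = true} =
      ⋂ z ∈ {z | z ∈ l}, (fun ω : (Fin d → ℤ) → Bool => ω z) ⁻¹' {true} := by
    ext ω; simp
  rw [this]
  exact MeasurableSet.biInter (Set.to_countable _)
    (fun z _ => (measurable_pi_apply z) (by trivial))

lemma connEvent_self {A : Set (Fin d → ℤ)} {x : Fin d → ℤ} (hx : x ∈ A) :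
    {ω : (Fin d → ℤ) → Bool | ω x = true} ⊆ connEvent A x x := by
  intro ω hω
  exact latJoined_refl ⟨hx, hω⟩


/-! ### Equivariance and measure invariance -/

lemma latJoined_equiv (g : Equiv.Perm (Fin d → ℤ))
    (hadj : ∀ a b, nnAdj a b ↔ nnAdj (g a) (g b))
    (A : Set (Fin d → ℤ)) (x y : Fin d → ℤ) :
    LatJoined A x y ↔ LatJoined (g '' A) (g x) (g y) := by
  constructor
  · exact latJoined_map g (fun a b => (hadj a b).mp)
  · intro h
    have h2 := latJoined_map g.symm (fun a b hab => ?_) h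
    · simpa [Equiv.symm_image_image] using h2
    · have := (hadj (g.symm a) (g.symm b)).mpr
      simp only [Equiv.apply_symm_apply] at this
      exact this hab

lemma preimage_comp_connEvent (g : Equiv.Perm (Fin d → ℤ))
    (hadj : ∀ a b, nnAdj a b ↔ nnAdj (g a) (g b))
    (A : Set (Fin d → ℤ)) (x y : Fin d → ℤ) :
    (fun ω : (Fin d → ℤ) → Bool => (fun z => ω (g z))) ⁻¹' connEvent A x y
      = connEvent (g '' A) (g x) (g y) := by
  ext ω
  simp only [connEvent, Set.mem_preimage, Set.mem_setOf_eq]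
  have hset : A ∩ openSites (fun z => ω (g z)) = g ⁻¹' (g '' A ∩ openSites ω) := by
    ext z
    simp only [Set.mem_inter_iff, Set.mem_preimage, openSites, Set.mem_setOf_eq,
      Set.mem_image]
    constructor
    · rintro ⟨hz, ho⟩; exact ⟨⟨z, hz, rfl⟩, ho⟩
    · rintro ⟨⟨u, hu, huz⟩, ho⟩
      have : u = z := g.injective huz
      subst this
      exact ⟨hu, ho⟩
  rw [hset, latJoined_equiv g hadj, Set.image_preimage_eq _ g.surjective]

lemma measure_conn_equiv {μ : Measure ((Fin d → ℤ) → Bool)}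
    (g : Equiv.Perm (Fin d → ℤ))
    (hadj : ∀ a b, nnAdj a b ↔ nnAdj (g a) (g b))
    (hinv : Measure.map (fun ω : (Fin d → ℤ) → Bool => fun z => ω (g z)) μ = μ)
    (A : Set (Fin d → ℤ)) (x y : Fin d → ℤ) :
    μ (connEvent (g '' A) (g x) (g y)) = μ (connEvent A x y) := by
  conv_rhs => rw [← hinv]
  rw [Measure.map_apply (measurable_pi_lambda _ (fun z => measurable_pi_apply _))
    (connEvent_measurable A x y), preimage_comp_connEvent g hadj]

lemma nnAdj_shift (v a b : Fin d → ℤ) : nnAdj a b ↔ nnAdj (a + v) (b + v) := by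
  unfold nnAdj
  have h : ∀ i, (a + v) i - (b + v) i = a i - b i := fun i => by
    simp only [Pi.add_apply]; ring
  simp only [h]

lemma measure_conn_shift {μ : Measure ((Fin d → ℤ) → Bool)}
    (hshift : ∀ v : Fin d → ℤ,
      Measure.map (fun ω : (Fin d → ℤ) → Bool => fun x => ω (x + v)) μ = μ)
    (v : Fin d → ℤ) (A : Set (Fin d → ℤ)) (x y : Fin d → ℤ) :
    μ (connEvent ((· + v) '' A) (x + v) (y + v)) = μ (connEvent A x y) := by
  have h := measure_conn_equiv (μ := μ) (Equiv.addRight v)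
    (fun a b => nnAdj_shift v a b) (hshift v) A x y
  simpa using h

/-! ### The sign-permutation symmetry -/

def sgnPerm (σ : Equiv.Perm (Fin d)) (ε : Fin d → ℤ) (hε : ∀ i, ε i = 1 ∨ ε i = -1) :
    Equiv.Perm (Fin d → ℤ) where
  toFun x := fun i => ε i * x (σ i)
  invFun y := fun j => ε (σ.symm j) * y (σ.symm j)
  left_inv x := by
    funext j
    rcases hε (σ.symm j) with h | h <;>
      simp [h, Equiv.apply_symm_apply]
  right_inv y := by
    funext i
    rcases hε i with h | h <;>
      simp [h, Equiv.symm_apply_apply]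

lemma sgnPerm_apply (σ : Equiv.Perm (Fin d)) (ε : Fin d → ℤ)
    (hε : ∀ i, ε i = 1 ∨ ε i = -1) (x : Fin d → ℤ) (i : Fin d) :
    sgnPerm σ ε hε x i = ε i * x (σ i) := rfl

lemma nnAdj_sgnPerm (σ : Equiv.Perm (Fin d)) (ε : Fin d → ℤ)
    (hε : ∀ i, ε i = 1 ∨ ε i = -1) (a b : Fin d → ℤ) :
    nnAdj a b ↔ nnAdj (sgnPerm σ ε hε a) (sgnPerm σ ε hε b) := by
  unfold nnAdj
  have h : ∀ i, (sgnPerm σ ε hε a i - sgnPerm σ ε hε b i) ^ 2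
      = (a (σ i) - b (σ i)) ^ 2 := by
    intro i
    rcases hε i with h | h <;> simp only [sgnPerm_apply, h] <;> ring
  rw [Finset.sum_congr rfl (fun i _ => h i)]
  rw [← Equiv.sum_comp σ (fun j => (a j - b j) ^ 2)]

lemma sgnPerm_image_box (σ : Equiv.Perm (Fin d)) (ε : Fin d → ℤ)
    (hε : ∀ i, ε i = 1 ∨ ε i = -1) (r : ℕ) :
    sgnPerm σ ε hε '' latBox d r = latBox d r := by
  have habs : ∀ (η : Fin d → ℤ) (hη : ∀ i, η i = 1 ∨ η i = -1)
      (τ : Equiv.Perm (Fin d)) (x : Fin d → ℤ), x ∈ latBox d r →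
      sgnPerm τ η hη x ∈ latBox d r := by
    intro η hη τ x hx i
    rcases hη i with h | h <;> simp only [sgnPerm_apply, h] <;>
      simpa using hx (τ i)
  apply Set.Subset.antisymm
  · rintro _ ⟨x, hx, rfl⟩; exact habs ε hε σ x hx
  · intro x hx
    refine ⟨(sgnPerm σ ε hε).symm x, ?_, Equiv.apply_symm_apply _ _⟩
    have : (sgnPerm σ ε hε).symm x
        = sgnPerm σ.symm (fun j => ε (σ.symm j)) (fun j => hε _) x := rfl
    rw [this]
    exact habs _ _ _ x hx

lemma measure_conn_sgn {μ : Measure ((Fin d → ℤ) → Bool)}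
    (hsym : ∀ σ : Equiv.Perm (Fin d), ∀ ε : Fin d → ℤ, (∀ i, ε i = 1 ∨ ε i = -1) →
      Measure.map
        (fun ω : (Fin d → ℤ) → Bool => fun x => ω (fun i => ε i * x (σ i))) μ = μ)
    (σ : Equiv.Perm (Fin d)) (ε : Fin d → ℤ) (hε : ∀ i, ε i = 1 ∨ ε i = -1)
    (r : ℕ) (w : Fin d → ℤ) :
    μ (connEvent (latBox d r) 0 (sgnPerm σ ε hε w)) = μ (connEvent (latBox d r) 0 w) := by
  have h := measure_conn_equiv (μ := μ) (sgnPerm σ ε hε)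
    (nnAdj_sgnPerm σ ε hε) (hsym σ ε hε) (latBox d r) 0 w
  have h0 : sgnPerm σ ε hε 0 = 0 := by
    funext i; simp [sgnPerm_apply]
  rwa [sgnPerm_image_box, h0] at h

/-! ### First-exit truncation -/

lemma exists_exit {s : ℕ} (hs : 1 ≤ s) {O : Set (Fin d → ℤ)} {a b : Fin d → ℤ}
    (hj : LatJoined O a b) (hfar : ∃ i, (s : ℤ) ≤ |b i - a i|) :
    ∃ w : Fin d → ℤ, (∀ i, |w i| ≤ (s : ℤ)) ∧ (∃ i, |w i| = (s : ℤ)) ∧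
      LatJoined ({z | ∀ i, |z i - a i| ≤ (s : ℤ)} ∩ O) a (a + w) := by
  obtain ⟨l, c, hh, hl, hm⟩ := hj
  classical
  set p : (Fin d → ℤ) → Bool := fun z => decide (∀ i, |z i - a i| ≤ (s : ℤ) - 1) with hp
  have hpiff : ∀ z, p z = true ↔ ∀ i, |z i - a i| ≤ (s : ℤ) - 1 := by
    intro z; simp [hp]
  have hb_mem : b ∈ l := List.mem_of_mem_getLast? (by rw [hl]; rfl)
  have hpb : ¬ p b = true := by
    rw [hpiff]
    intro hall
    obtain ⟨i, hi⟩ := hfar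
    have := hall i
    omega
  have hdne : l.dropWhile p ≠ [] := by
    intro hnil
    exact hpb (List.dropWhile_eq_nil_iff.mp hnil b hb_mem)
  set l1 := l.takeWhile p with hl1
  have hsplit : l1 ++ l.dropWhile p = l := List.takeWhile_append_dropWhile (p := p) (l := l)
  cases hdw : l.dropWhile p with
  | nil => exact absurd hdw hdne
  | cons zs rest' =>
    have hzs_not : ¬ p zs = true := by
      have hf : l.find? (fun x => ! p x) = some zs := by
        rw [List.find?_not_eq_head?_dropWhile, hdw]; rfl
      have := List.find?_some hf
      simpa using this
    -- the head of l is a and it satisfies p, hence l1 = a :: _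
    cases hlc : l with
    | nil => rw [hlc] at hh; simp at hh
    | cons a' t =>
      have ha' : a = a' := by rw [hlc] at hh; exact (by simpa using hh : a' = a).symm
      subst ha'
      have hpa : p a = true := by
        rw [hpiff]
        intro i
        simp only [sub_self, abs_zero]
        omega
      have hl1c : l1 = a :: t.takeWhile p := by
        rw [hl1, hlc, List.takeWhile_cons_of_pos hpa]
      -- the path q
      have hsplit2 : l = l1 ++ (zs :: rest') := by rw [← hsplit, hdw]
      have hpre : (l1 ++ [zs]) <+: l := by
        refine ⟨rest', ?_⟩
        rw [List.append_assoc, List.singleton_append, ← hsplit2]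
      have hcq : (l1 ++ [zs]).Chain' nnAdj := c.prefix hpre
      -- junction adjacency
      have hcl : (l1 ++ (zs :: rest')).Chain' nnAdj := by rwa [← hsplit2]
      obtain ⟨-, -, hjunc⟩ := List.isChain_append.mp hcl
      have hl1ne : l1 ≠ [] := by rw [hl1c]; simp
      obtain ⟨u, hu⟩ : ∃ u, l1.getLast? = some u := by
        cases hgl : l1.getLast? with
        | none => exact absurd (List.getLast?_eq_none_iff.mp hgl) hl1ne
        | some u => exact ⟨u, rfl⟩
      have hadj_u : nnAdj u zs := hjunc u (by rw [hu]; rfl) zs rfl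
      have hu_mem : u ∈ l1 := List.mem_of_mem_getLast? (by rw [hu]; rfl)
      have hu_p : ∀ i, |u i - a i| ≤ (s : ℤ) - 1 :=
        (hpiff u).mp (List.mem_takeWhile_imp hu_mem)
      have hzs_box : ∀ i, |zs i - a i| ≤ (s : ℤ) := by
        intro i
        have h1 := nnAdj_coord_le hadj_u i
        have h2 := hu_p i
        have : zs i - a i = (zs i - u i) + (u i - a i) := by ring
        rw [this]
        calc |(zs i - u i) + (u i - a i)| ≤ |zs i - u i| + |u i - a i| := abs_add_le _ _
        _ ≤ 1 + ((s:ℤ) - 1) := by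
              have := abs_sub_comm (u i) (zs i)
              omega
        _ = (s : ℤ) := by ring
      have hzs_far : ∃ i, |zs i - a i| = (s : ℤ) := by
        rw [hpiff] at hzs_not
        push_neg at hzs_not
        obtain ⟨i, hi⟩ := hzs_not
        exact ⟨i, by have := hzs_box i; omega⟩
      refine ⟨zs - a, ?_, ?_, ?_⟩
      · intro i; simpa [Pi.sub_apply] using hzs_box i
      · obtain ⟨i, hi⟩ := hzs_far; exact ⟨i, by simpa [Pi.sub_apply] using hi⟩
      · have hzseq : a + (zs - a) = zs := by abel
        rw [hzseq]
        refine ⟨l1 ++ [zs], hcq, ?_, List.getLast?_concat, ?_⟩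
        · rw [List.head?_append, hl1c]
          rfl
        · intro z hz
          rcases List.mem_append.mp hz with hz1 | hz2
          · have hzp := (hpiff z).mp (List.mem_takeWhile_imp hz1)
            have hzl : z ∈ l := hpre.subset (List.mem_append.mpr (Or.inl hz1))
            exact ⟨fun i => by have := hzp i; omega, hm z hzl⟩
          · have : z = zs := by simpa using hz2
            subst this
            have hzl : z ∈ l := hpre.subset (List.mem_append.mpr (Or.inr (by simp)))
            exact ⟨hzs_box, hm z hzl⟩

/-! ### Finsets and the union bound -/

noncomputable def boxF (d s : ℕ) : Finset (Fin d → ℤ) :=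
  Fintype.piFinset (fun _ => Finset.Icc (-(s : ℤ)) (s : ℤ))

lemma mem_boxF {s : ℕ} {x : Fin d → ℤ} : x ∈ boxF d s ↔ ∀ i, |x i| ≤ (s : ℤ) := by
  simp [boxF, Fintype.mem_piFinset, abs_le]

lemma card_boxF (s : ℕ) : (boxF d s).card = (2 * s + 1) ^ d := by
  rw [boxF, Fintype.card_piFinset]
  have h : (Finset.Icc (-(s : ℤ)) (s : ℤ)).card = 2 * s + 1 := by
    rw [Int.card_Icc]; omega
  simp [h]

open scoped Classical in
noncomputable def sphF (d s : ℕ) : Finset (Fin d → ℤ) :=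
  (boxF d s).filter (fun w => ∃ i, |w i| = (s : ℤ))

lemma mem_sphF {s : ℕ} {w : Fin d → ℤ} :
    w ∈ sphF d s ↔ (∀ i, |w i| ≤ (s : ℤ)) ∧ ∃ i, |w i| = (s : ℤ) := by
  classical
  simp [sphF, mem_boxF, Finset.mem_filter]

lemma cube_eq (a : Fin d → ℤ) (s : ℕ) :
    {z : Fin d → ℤ | ∀ i, |z i - a i| ≤ (s : ℤ)} = (· + a) '' latBox d s := by
  ext z
  simp only [Set.mem_setOf_eq, Set.mem_image, latBox]
  constructor
  · intro h
    exact ⟨z - a, fun i => by simpa [Pi.sub_apply] using h i, by abel⟩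
  · rintro ⟨u, hu, rfl⟩ i
    simpa [Pi.add_apply] using hu i

lemma cross_subset {s : ℕ} (hs : 1 ≤ s) :
    crossEvent d s ⊆ ⋃ a ∈ boxF d s, ⋃ w ∈ sphF d s,
      connEvent ((· + a) '' latBox d s) a (a + w) := by
  intro ω hω
  obtain ⟨A, hAopen, hAconn, ⟨a, haA, haB⟩, ⟨b, hbA, hbS⟩⟩ := hω
  have hj : LatJoined (openSites ω) a b := latJoined_mono hAopen (hAconn a haA b hbA)
  have hfar : ∃ i, (s : ℤ) ≤ |b i - a i| := by
    obtain ⟨i, hi⟩ := hbS.2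
    refine ⟨i, ?_⟩
    have h1 : |a i| ≤ (s : ℤ) := haB i
    have h2 : ((2 * s : ℕ) : ℤ) = 2 * (s : ℤ) := by push_cast; ring
    rw [h2] at hi
    have h3 := abs_sub_abs_le_abs_sub (b i) (a i)
    omega
  obtain ⟨w, hw1, hw2, hj'⟩ := exists_exit hs hj hfar
  simp only [Set.mem_iUnion]
  refine ⟨a, mem_boxF.mpr haB, w, mem_sphF.mpr ⟨hw1, hw2⟩, ?_⟩
  show LatJoined (((· + a) '' latBox d s) ∩ openSites ω) a (a + w)
  rw [← cube_eq]
  exact hj'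

lemma key_w {μ : Measure ((Fin d → ℤ) → Bool)}
    (hshift : ∀ v : Fin d → ℤ,
      Measure.map (fun ω : (Fin d → ℤ) → Bool => fun x => ω (x + v)) μ = μ)
    (hd : 0 < d) {κ : ℝ} {s : ℕ} (hs : 1 ≤ s)
    (hcross : ENNReal.ofReal κ ≤ μ (crossEvent d s)) :
    ∃ w : Fin d → ℤ, (∀ i, |w i| ≤ (s : ℤ)) ∧ (∃ i, |w i| = (s : ℤ)) ∧
      ENNReal.ofReal κ / (((2 * s + 1) ^ (2 * d) : ℕ) : ENNReal)
        ≤ μ (connEvent (latBox d s) 0 w) := by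
  classical
  -- maximizing w over the sphere
  have hne : (sphF d s).Nonempty := by
    refine ⟨fun _ => (s : ℤ), mem_sphF.mpr ⟨fun i => by simp, ⟨⟨0, hd⟩, by simp⟩⟩⟩
  obtain ⟨w, hwmem, hwmax⟩ := Finset.exists_max_image (sphF d s)
    (fun w => μ (connEvent (latBox d s) 0 w)) hne
  obtain ⟨hw1, hw2⟩ := mem_sphF.mp hwmem
  refine ⟨w, hw1, hw2, ?_⟩
  -- union bound
  have h1 : μ (crossEvent d s) ≤ ∑ a ∈ boxF d s, ∑ v ∈ sphF d s,
      μ (connEvent (latBox d s) 0 v) := by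
    calc μ (crossEvent d s)
        ≤ μ (⋃ a ∈ boxF d s, ⋃ v ∈ sphF d s,
            connEvent ((· + a) '' latBox d s) a (a + v)) :=
          measure_mono (cross_subset hs)
      _ ≤ ∑ a ∈ boxF d s, μ (⋃ v ∈ sphF d s,
            connEvent ((· + a) '' latBox d s) a (a + v)) :=
          measure_biUnion_finset_le _ _
      _ ≤ ∑ a ∈ boxF d s, ∑ v ∈ sphF d s,
            μ (connEvent ((· + a) '' latBox d s) a (a + v)) :=
          Finset.sum_le_sum (fun a _ => measure_biUnion_finset_le _ _)
      _ = ∑ a ∈ boxF d s, ∑ v ∈ sphF d s, μ (connEvent (latBox d s) 0 v) := by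
          refine Finset.sum_congr rfl (fun a _ => Finset.sum_congr rfl (fun v _ => ?_))
          have h := measure_conn_shift hshift a (latBox d s) 0 v
          rw [zero_add, add_comm v a] at h
          exact h
  have h2 : ∑ a ∈ boxF d s, ∑ v ∈ sphF d s, μ (connEvent (latBox d s) 0 v)
      ≤ (((2 * s + 1) ^ (2 * d) : ℕ) : ENNReal) * μ (connEvent (latBox d s) 0 w) := by
    have hin : ∑ v ∈ sphF d s, μ (connEvent (latBox d s) 0 v)
        ≤ ((sphF d s).card : ENNReal) * μ (connEvent (latBox d s) 0 w) := by
      rw [← nsmul_eq_mul]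
      exact Finset.sum_le_card_nsmul _ _ _ (fun v hv => hwmax v hv)
    calc ∑ a ∈ boxF d s, ∑ v ∈ sphF d s, μ (connEvent (latBox d s) 0 v)
        ≤ ∑ _a ∈ boxF d s, ((sphF d s).card : ENNReal)
            * μ (connEvent (latBox d s) 0 w) :=
          Finset.sum_le_sum (fun a _ => hin)
      _ = ((boxF d s).card : ENNReal) * (((sphF d s).card : ENNReal)
            * μ (connEvent (latBox d s) 0 w)) := by
          rw [Finset.sum_const, nsmul_eq_mul]
      _ ≤ (((2 * s + 1) ^ (2 * d) : ℕ) : ENNReal) * μ (connEvent (latBox d s) 0 w) := by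
          rw [← mul_assoc]
          apply mul_le_mul_left
          have hc1 : (boxF d s).card = (2 * s + 1) ^ d := card_boxF s
          have hc2 : (sphF d s).card ≤ (2 * s + 1) ^ d := by
            rw [← hc1]; exact Finset.card_filter_le _ _
          have : (boxF d s).card * (sphF d s).card ≤ (2 * s + 1) ^ (2 * d) := by
            rw [two_mul d, pow_add, hc1]
            exact Nat.mul_le_mul_left _ hc2
          calc ((boxF d s).card : ENNReal) * ((sphF d s).card : ENNReal)
              = (((boxF d s).card * (sphF d s).card : ℕ) : ENNReal) := by push_cast; ring
            _ ≤ _ := by exact_mod_cast Nat.cast_le.mpr this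
      _ = _ := rfl
  have h3 : ENNReal.ofReal κ ≤ (((2 * s + 1) ^ (2 * d) : ℕ) : ENNReal)
      * μ (connEvent (latBox d s) 0 w) := le_trans hcross (le_trans h1 h2)
  rw [ENNReal.div_le_iff_le_mul
    (Or.inl (show (((2 * s + 1) ^ (2 * d) : ℕ) : ENNReal) ≠ 0 from
      Nat.cast_ne_zero.mpr (by positivity)))
    (Or.inl (ENNReal.natCast_ne_top _))]
  rw [mul_comm]
  exact h3

/-! ### Gluing via positive association -/

lemma glue {μ : Measure ((Fin d → ℤ) → Bool)} (hPA : PosAssoc μ)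
    {A : Set (Fin d → ℤ)} {x y z : Fin d → ℤ} {α β : ENNReal}
    (h1 : α ≤ μ (connEvent A x y)) (h2 : β ≤ μ (connEvent A y z)) :
    α * β ≤ μ (connEvent A x z) := by
  have hH := hPA (connEvent A x y) (connEvent A y z)
    (connEvent_measurable _ _ _) (connEvent_measurable _ _ _)
    (fun ω ω' hle h => connEvent_increasing hle h)
    (fun ω ω' hle h => connEvent_increasing hle h)
  calc α * β ≤ μ (connEvent A x y) * μ (connEvent A y z) := mul_le_mul' h1 h2
    _ ≤ μ (connEvent A x y ∩ connEvent A y z) := hH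
    _ ≤ μ (connEvent A x z) :=
        measure_mono (fun ω hω => latJoined_trans hω.1 hω.2)

/-! ### Site events -/

lemma connEvent_singleton (z : Fin d → ℤ) :
    connEvent {z} z z = {ω : (Fin d → ℤ) → Bool | ω z = true} := by
  ext ω
  constructor
  · rintro ⟨l, c, hh, hl, hm⟩
    have hz : z ∈ l := List.mem_of_mem_head? (by rw [hh]; rfl)
    exact (hm z hz).2
  · intro h
    exact latJoined_refl ⟨rfl, h⟩

lemma measure_site_eq {μ : Measure ((Fin d → ℤ) → Bool)}
    (hshift : ∀ v : Fin d → ℤ,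
      Measure.map (fun ω : (Fin d → ℤ) → Bool => fun x => ω (x + v)) μ = μ)
    (a z : Fin d → ℤ) :
    μ {ω : (Fin d → ℤ) → Bool | ω a = true} = μ {ω | ω z = true} := by
  rw [← connEvent_singleton, ← connEvent_singleton]
  have h := measure_conn_shift hshift (a - z) {z} z z
  have h1 : (· + (a - z)) '' ({z} : Set (Fin d → ℤ)) = {a} := by
    rw [Set.image_singleton]
    congr 1
    abel
  have h2 : z + (a - z) = a := by abel
  rw [h1, h2] at h
  exact h

lemma site_bound {μ : Measure ((Fin d → ℤ) → Bool)}
    (hshift : ∀ v : Fin d → ℤ,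
      Measure.map (fun ω : (Fin d → ℤ) → Bool => fun x => ω (x + v)) μ = μ)
    {κ : ℝ} (hcross1 : ENNReal.ofReal κ ≤ μ (crossEvent d 1)) (z : Fin d → ℤ) :
    ENNReal.ofReal κ / ((3 ^ d : ℕ) : ENNReal) ≤ μ {ω : (Fin d → ℤ) → Bool | ω z = true} := by
  have hsub : crossEvent d 1 ⊆ ⋃ a ∈ boxF d 1, {ω : (Fin d → ℤ) → Bool | ω a = true} := by
    intro ω hω
    obtain ⟨A, hAopen, hAconn, ⟨a, haA, haB⟩, -⟩ := hω
    simp only [Set.mem_iUnion]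
    exact ⟨a, mem_boxF.mpr (fun i => by exact_mod_cast haB i), hAopen haA⟩
  have h1 : μ (crossEvent d 1) ≤ ((3 ^ d : ℕ) : ENNReal) * μ {ω : (Fin d → ℤ) → Bool | ω z = true} := by
    calc μ (crossEvent d 1)
        ≤ μ (⋃ a ∈ boxF d 1, {ω : (Fin d → ℤ) → Bool | ω a = true}) := measure_mono hsub
      _ ≤ ∑ a ∈ boxF d 1, μ {ω : (Fin d → ℤ) → Bool | ω a = true} :=
          measure_biUnion_finset_le _ _
      _ = ∑ _a ∈ boxF d 1, μ {ω : (Fin d → ℤ) → Bool | ω z = true} :=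
          Finset.sum_congr rfl (fun a _ => measure_site_eq hshift a z)
      _ = ((boxF d 1).card : ENNReal) * μ {ω : (Fin d → ℤ) → Bool | ω z = true} := by
          rw [Finset.sum_const, nsmul_eq_mul]
      _ = ((3 ^ d : ℕ) : ENNReal) * μ {ω : (Fin d → ℤ) → Bool | ω z = true} := by
          norm_num [card_boxF]
  rw [ENNReal.div_le_iff_le_mul
    (Or.inl (show ((3 ^ d : ℕ) : ENNReal) ≠ 0 from Nat.cast_ne_zero.mpr (by positivity)))
    (Or.inl (ENNReal.natCast_ne_top _))]
  rw [mul_comm]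
  exact le_trans hcross1 h1

/-! ### Unit vectors -/

def unitv (i : Fin d) (c : ℤ) : Fin d → ℤ := fun k => if k = i then c else 0

lemma nnAdj_zero_unitv (j : Fin d) {ζ : ℤ} (hζ : ζ = 1 ∨ ζ = -1) :
    nnAdj 0 (unitv j ζ) := by
  unfold nnAdj
  have h : ∀ k, ((0 : Fin d → ℤ) k - unitv j ζ k) ^ 2 = if k = j then 1 else 0 := by
    intro k
    by_cases hk : k = j
    · rcases hζ with h | h <;> simp [unitv, hk, h]
    · simp [unitv, hk]
  rw [Finset.sum_congr rfl (fun k _ => h k)]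
  simp

lemma nnAdj_zero_char {η : Fin d → ℤ} (h : nnAdj 0 η) :
    ∃ j ζ, (ζ = 1 ∨ ζ = -1) ∧ η = unitv j ζ := by
  have hcle : ∀ k, |η k| ≤ 1 := by
    intro k
    have := nnAdj_coord_le h k
    simpa using this
  have hex : ∃ j, η j ≠ 0 := by
    by_contra hc
    push_neg at hc
    have : ∑ k, ((0 : Fin d → ℤ) k - η k) ^ 2 = 0 := by
      apply Finset.sum_eq_zero
      intro k _
      simp [hc k]
    rw [h] at this
    exact one_ne_zero this
  obtain ⟨j, hj⟩ := hex
  have hzero : ∀ k, k ≠ j → η k = 0 := by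
    intro k hk
    by_contra hc
    have h2 : ((0 : Fin d → ℤ) j - η j) ^ 2 + ((0 : Fin d → ℤ) k - η k) ^ 2
        ≤ ∑ m, ((0 : Fin d → ℤ) m - η m) ^ 2 := by
      have h4 : ∑ m ∈ ({j, k} : Finset (Fin d)), ((0 : Fin d → ℤ) m - η m) ^ 2
          ≤ ∑ m, ((0 : Fin d → ℤ) m - η m) ^ 2 :=
        Finset.sum_le_sum_of_subset_of_nonneg (Finset.subset_univ _)
          (fun m _ _ => sq_nonneg _)
      rwa [Finset.sum_pair (Ne.symm hk)] at h4
    rw [h] at h2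
    have hj2 : 1 ≤ ((0 : Fin d → ℤ) j - η j) ^ 2 := by
      have h3 := hcle j
      have : η j = 1 ∨ η j = -1 := by
        rcases abs_le.mp h3 with ⟨hl, hr⟩
        omega
      rcases this with h | h <;> simp [h]
    have hk2 : 1 ≤ ((0 : Fin d → ℤ) k - η k) ^ 2 := by
      have h3 := hcle k
      have : η k = 1 ∨ η k = -1 := by
        rcases abs_le.mp h3 with ⟨hl, hr⟩
        omega
      rcases this with h | h <;> simp [h]
    omega
  have hζ : η j = 1 ∨ η j = -1 := by
    rcases abs_le.mp (hcle j) with ⟨hl, hr⟩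
    omega
  refine ⟨j, η j, hζ, ?_⟩
  funext k
  by_cases hk : k = j
  · subst hk; simp [unitv]
  · simp [unitv, hk, hzero k hk]

lemma measure_unit_pair_eq {μ : Measure ((Fin d → ℤ) → Bool)}
    (hsym : ∀ σ : Equiv.Perm (Fin d), ∀ ε : Fin d → ℤ, (∀ i, ε i = 1 ∨ ε i = -1) →
      Measure.map
        (fun ω : (Fin d → ℤ) → Bool => fun x => ω (fun i => ε i * x (σ i))) μ = μ)
    (j j' : Fin d) {ζ ζ' : ℤ} (hζ : ζ = 1 ∨ ζ = -1) (hζ' : ζ' = 1 ∨ ζ' = -1) :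
    μ (connEvent {0, unitv j ζ} 0 (unitv j ζ))
      = μ (connEvent {0, unitv j' ζ'} 0 (unitv j' ζ')) := by
  set σ : Equiv.Perm (Fin d) := Equiv.swap j' j with hσ
  set ε : Fin d → ℤ := fun k => if k = j' then ζ * ζ' else 1 with hεdef
  have hε : ∀ k, ε k = 1 ∨ ε k = -1 := by
    intro k
    by_cases hk : k = j' <;> rcases hζ with h | h <;> rcases hζ' with h' | h' <;>
      simp [hεdef, hk, h, h']
  have hg0 : sgnPerm σ ε hε 0 = 0 := by
    funext k; simp [sgnPerm_apply]
  have hgη : sgnPerm σ ε hε (unitv j ζ) = unitv j' ζ' := by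
    funext k
    simp only [sgnPerm_apply, unitv]
    by_cases hk : k = j'
    · rw [hk]
      have hσj : σ j' = j := Equiv.swap_apply_left j' j
      rw [hσj]
      rcases hζ with h | h <;> rcases hζ' with h' | h' <;> simp [hεdef, h, h']
    · have hσk : σ k ≠ j := by
        intro hc
        apply hk
        have := σ.injective (hc.trans (Equiv.swap_apply_left j' j).symm)
        exact this
      simp [hεdef, hk, hσk]
  have h := measure_conn_equiv (μ := μ) (sgnPerm σ ε hε) (nnAdj_sgnPerm σ ε hε)
    (hsym σ ε hε) {0, unitv j ζ} 0 (unitv j ζ)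
  rw [Set.image_pair, hg0, hgη] at h
  exact h.symm

lemma unit_bound {μ : Measure ((Fin d → ℤ) → Bool)}
    (hshift : ∀ v : Fin d → ℤ,
      Measure.map (fun ω : (Fin d → ℤ) → Bool => fun x => ω (x + v)) μ = μ)
    (hsym : ∀ σ : Equiv.Perm (Fin d), ∀ ε : Fin d → ℤ, (∀ i, ε i = 1 ∨ ε i = -1) →
      Measure.map
        (fun ω : (Fin d → ℤ) → Bool => fun x => ω (fun i => ε i * x (σ i))) μ = μ)
    {κ : ℝ} (hcross1 : ENNReal.ofReal κ ≤ μ (crossEvent d 1))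
    (j : Fin d) {ζ : ℤ} (hζ : ζ = 1 ∨ ζ = -1) :
    ENNReal.ofReal κ / ((3 ^ (2 * d) : ℕ) : ENNReal)
      ≤ μ (connEvent {0, unitv j ζ} 0 (unitv j ζ)) := by
  classical
  set nbrF : Finset (Fin d → ℤ) := (boxF d 1).filter (fun η => nnAdj 0 η) with hnbr
  have hsub : crossEvent d 1 ⊆ ⋃ a ∈ boxF d 1, ⋃ η ∈ nbrF,
      connEvent {a, a + η} a (a + η) := by
    intro ω hω
    obtain ⟨A, hAopen, hAconn, ⟨a, haA, haB⟩, ⟨b, hbA, hbS⟩⟩ := hω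
    obtain ⟨l, c, hh, hl, hm⟩ := hAconn a haA b hbA
    have hba : b ≠ a := by
      obtain ⟨i, hi⟩ := hbS.2
      intro hc
      subst hc
      have := haB i
      have h2 : ((2 * 1 : ℕ) : ℤ) = 2 := by norm_num
      rw [h2] at hi
      omega
    cases l with
    | nil => simp at hh
    | cons u t =>
      have hu : u = a := by simpa using hh
      subst hu
      cases t with
      | nil =>
        exact absurd (by simpa using hl : u = b).symm hba
      | cons v t' =>
        have hadj : nnAdj u v := (List.isChain_cons_cons.mp c).1
        have hη : nnAdj 0 (v - u) := by
          have := (nnAdj_shift (-u) u v).mp hadj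
          simpa [add_neg_cancel, ← sub_eq_add_neg] using this
        simp only [Set.mem_iUnion]
        refine ⟨u, mem_boxF.mpr (fun i => by exact_mod_cast haB i), v - u, ?_, ?_⟩
        · rw [hnbr, Finset.mem_filter]
          refine ⟨mem_boxF.mpr (fun i => ?_), hη⟩
          have h5 := nnAdj_coord_le hη i
          rw [abs_sub_comm] at h5
          simpa [Pi.sub_apply] using h5
        · have huv : u + (v - u) = v := by abel
          rw [huv]
          refine ⟨[u, v], by show List.IsChain _ _; simp [List.isChain_cons_cons, hadj], rfl, rfl, ?_⟩
          intro w hw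
          simp only [List.mem_cons, List.not_mem_nil, or_false] at hw
          constructor
          · rcases hw with rfl | rfl
            · exact Set.mem_insert _ _
            · exact Set.mem_insert_of_mem _ rfl
          · rcases hw with rfl | rfl
            · exact hAopen haA
            · exact hAopen (hm _ (by simp))
  -- each term equals the target
  have heq : ∀ a ∈ boxF d 1, ∀ η ∈ nbrF,
      μ (connEvent {a, a + η} a (a + η))
        = μ (connEvent {0, unitv j ζ} 0 (unitv j ζ)) := by
    intro a _ η hη
    have hη' : nnAdj 0 η := (Finset.mem_filter.mp hη).2
    obtain ⟨j0, ζ0, hζ0, rfl⟩ := nnAdj_zero_char hη'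
    have hsh := measure_conn_shift hshift a {0, unitv j0 ζ0} 0 (unitv j0 ζ0)
    have him : (· + a) '' ({0, unitv j0 ζ0} : Set (Fin d → ℤ))
        = {a, a + unitv j0 ζ0} := by
      rw [Set.image_pair]
      have e1 : (0 : Fin d → ℤ) + a = a := zero_add a
      have e2 : unitv j0 ζ0 + a = a + unitv j0 ζ0 := add_comm _ _
      rw [e1, e2]
    have e3 : (0 : Fin d → ℤ) + a = a := zero_add a
    rw [him, e3, add_comm (unitv j0 ζ0) a] at hsh
    rw [hsh]
    exact measure_unit_pair_eq hsym j0 j hζ0 hζ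
  -- sum up
  have h1 : μ (crossEvent d 1) ≤ ((3 ^ (2 * d) : ℕ) : ENNReal)
      * μ (connEvent {0, unitv j ζ} 0 (unitv j ζ)) := by
    calc μ (crossEvent d 1)
        ≤ μ (⋃ a ∈ boxF d 1, ⋃ η ∈ nbrF, connEvent {a, a + η} a (a + η)) :=
          measure_mono hsub
      _ ≤ ∑ a ∈ boxF d 1, μ (⋃ η ∈ nbrF, connEvent {a, a + η} a (a + η)) :=
          measure_biUnion_finset_le _ _
      _ ≤ ∑ a ∈ boxF d 1, ∑ η ∈ nbrF, μ (connEvent {a, a + η} a (a + η)) :=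
          Finset.sum_le_sum (fun a _ => measure_biUnion_finset_le _ _)
      _ = ∑ a ∈ boxF d 1, ∑ _η ∈ nbrF, μ (connEvent {0, unitv j ζ} 0 (unitv j ζ)) := by
          refine Finset.sum_congr rfl (fun a ha => Finset.sum_congr rfl (fun η hη => ?_))
          exact heq a ha η hη
      _ = (((boxF d 1).card * nbrF.card : ℕ) : ENNReal)
            * μ (connEvent {0, unitv j ζ} 0 (unitv j ζ)) := by
          simp [Finset.sum_const, nsmul_eq_mul]
          ring
      _ ≤ ((3 ^ (2 * d) : ℕ) : ENNReal)
            * μ (connEvent {0, unitv j ζ} 0 (unitv j ζ)) := by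
          apply mul_le_mul_left
          have hc1 : (boxF d 1).card = 3 ^ d := by
            rw [card_boxF]
          have hc2 : nbrF.card ≤ 3 ^ d := by
            rw [← hc1, hnbr]; exact Finset.card_filter_le _ _
          have : (boxF d 1).card * nbrF.card ≤ 3 ^ (2 * d) := by
            rw [two_mul d, pow_add, hc1]
            exact Nat.mul_le_mul_left _ hc2
          exact_mod_cast Nat.cast_le.mpr this
  rw [ENNReal.div_le_iff_le_mul
    (Or.inl (show ((3 ^ (2 * d) : ℕ) : ENNReal) ≠ 0 from Nat.cast_ne_zero.mpr (by positivity)))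
    (Or.inl (ENNReal.natCast_ne_top _))]
  rw [mul_comm]
  exact le_trans hcross1 h1

lemma measure_conn_shift' {μ : Measure ((Fin d → ℤ) → Bool)}
    (hshift : ∀ v : Fin d → ℤ,
      Measure.map (fun ω : (Fin d → ℤ) → Bool => fun x => ω (x + v)) μ = μ)
    (z : Fin d → ℤ) (s : ℕ) (v : Fin d → ℤ) :
    μ (connEvent ((· + z) '' latBox d s) z (z + v)) = μ (connEvent (latBox d s) 0 v) := by
  have h := measure_conn_shift hshift z (latBox d s) 0 v
  rw [zero_add, add_comm v z] at h
  exact h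

lemma shifted_box_subset {z : Fin d → ℤ} {r s R : ℕ} (hz : ∀ k, |z k| ≤ (r : ℤ))
    (hrs : s + r ≤ R) : (· + z) '' latBox d s ⊆ latBox d R := by
  rintro _ ⟨u, hu, rfl⟩ k
  have h1 : |u k + z k| ≤ |u k| + |z k| := abs_add_le _ _
  have h2 := hu k
  have h3 := hz k
  have h4 : (s : ℤ) + (r : ℤ) ≤ (R : ℤ) := by exact_mod_cast hrs
  simp only [Pi.add_apply]
  omega

lemma double_move {μ : Measure ((Fin d → ℤ) → Bool)}
    (hPA : PosAssoc μ)
    (hshift : ∀ v : Fin d → ℤ,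
      Measure.map (fun ω : (Fin d → ℤ) → Bool => fun x => ω (x + v)) μ = μ)
    (hsym : ∀ σ : Equiv.Perm (Fin d), ∀ ε : Fin d → ℤ, (∀ i, ε i = 1 ∨ ε i = -1) →
      Measure.map
        (fun ω : (Fin d → ℤ) → Bool => fun x => ω (fun i => ε i * x (σ i))) μ = μ)
    (hd : 0 < d) {κ : ℝ} {r s : ℕ} (hs : 1 ≤ s) (h2s : 2 * s ≤ r)
    (hcross : ENNReal.ofReal κ ≤ μ (crossEvent d s))
    {z : Fin d → ℤ} (hz : z ∈ latBox d r) (i : Fin d) {ζ : ℤ} (hζ : ζ = 1 ∨ ζ = -1) :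
    (ENNReal.ofReal κ / (((2 * s + 1) ^ (2 * d) : ℕ) : ENNReal)) ^ 2
      ≤ μ (connEvent (latBox d (2 * r)) z (z + unitv i (2 * s * ζ))) := by
  obtain ⟨w, hw1, hw2, hwm⟩ := key_w hshift hd hs hcross
  obtain ⟨i0, hi0⟩ := hw2
  have hwi0 : w i0 = (s : ℤ) ∨ w i0 = -(s : ℤ) := (abs_eq (by positivity)).mp hi0
  classical
  set δ : ℤ := if w i0 = (s : ℤ) then ζ else -ζ with hδdef
  have hδ : δ = 1 ∨ δ = -1 := by
    by_cases h : w i0 = (s : ℤ) <;> rcases hζ with h' | h' <;>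
      simp [hδdef, h, h']
  set σ : Equiv.Perm (Fin d) := Equiv.swap i i0 with hσdef
  set ε1 : Fin d → ℤ := fun k => if k = i then δ else 1 with hε1def
  set ε2 : Fin d → ℤ := fun k => if k = i then δ else -1 with hε2def
  have hε1 : ∀ k, ε1 k = 1 ∨ ε1 k = -1 := by
    intro k; by_cases hk : k = i <;> rcases hδ with h | h <;> simp [hε1def, hk, h]
  have hε2 : ∀ k, ε2 k = 1 ∨ ε2 k = -1 := by
    intro k; by_cases hk : k = i <;> rcases hδ with h | h <;> simp [hε2def, hk, h]
  set v1 := sgnPerm σ ε1 hε1 w with hv1def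
  set v2 := sgnPerm σ ε2 hε2 w with hv2def
  have hv1m : μ (connEvent (latBox d s) 0 v1) = μ (connEvent (latBox d s) 0 w) :=
    measure_conn_sgn hsym σ ε1 hε1 s w
  have hv2m : μ (connEvent (latBox d s) 0 v2) = μ (connEvent (latBox d s) 0 w) :=
    measure_conn_sgn hsym σ ε2 hε2 s w
  have hb1 : ∀ k, |v1 k| ≤ (s : ℤ) := by
    intro k
    have : |v1 k| = |w (σ k)| := by
      rw [hv1def, sgnPerm_apply, abs_mul]
      rcases hε1 k with h | h <;> rw [h] <;> simp
    rw [this]; exact hw1 _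
  have hsum : v1 + v2 = unitv i (2 * s * ζ) := by
    funext k
    simp only [Pi.add_apply, hv1def, hv2def, sgnPerm_apply, unitv]
    by_cases hk : k = i
    · rw [hε1def, hε2def]
      simp only [hk, if_pos rfl]
      have hσi : σ i = i0 := Equiv.swap_apply_left i i0
      rw [hσi]
      rcases hwi0 with h | h
      · have hδζ : δ = ζ := by rw [hδdef, if_pos h]
        rw [h, hδζ]; simp only [if_true]; ring
      · have hne : w i0 ≠ (s : ℤ) := by
          intro hc
          rw [hc] at h
          have : (s : ℤ) = 0 := by omega
          have : (1 : ℤ) ≤ (s : ℤ) := by exact_mod_cast hs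
          omega
        have hδζ : δ = -ζ := by rw [hδdef, if_neg hne]
        rw [h, hδζ]; simp only [if_true]; ring
    · rw [hε1def, hε2def]
      simp only [if_neg hk]
      ring
  -- the two bond events
  have hsr : s ≤ r := by omega
  have hin1 : (· + z) '' latBox d s ⊆ latBox d (2 * r) :=
    shifted_box_subset (fun k => hz k) (by omega)
  have hzv1 : ∀ k, |(z + v1) k| ≤ ((r + s : ℕ) : ℤ) := by
    intro k
    have h1 := hz k
    have h2 := hb1 k
    simp only [Pi.add_apply]
    have h3 : |z k + v1 k| ≤ |z k| + |v1 k| := abs_add_le _ _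
    push_cast
    omega
  have hin2 : (· + (z + v1)) '' latBox d s ⊆ latBox d (2 * r) :=
    shifted_box_subset hzv1 (by omega)
  set t : ENNReal := ENNReal.ofReal κ / (((2 * s + 1) ^ (2 * d) : ℕ) : ENNReal) with htdef
  have he1 : t ≤ μ (connEvent (latBox d (2 * r)) z (z + v1)) := by
    calc t ≤ μ (connEvent (latBox d s) 0 v1) := by rw [hv1m]; exact hwm
      _ = μ (connEvent ((· + z) '' latBox d s) z (z + v1)) :=
          (measure_conn_shift' hshift z s v1).symm
      _ ≤ μ (connEvent (latBox d (2 * r)) z (z + v1)) :=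
          measure_mono (connEvent_mono hin1 _ _)
  have he2 : t ≤ μ (connEvent (latBox d (2 * r)) (z + v1) ((z + v1) + v2)) := by
    calc t ≤ μ (connEvent (latBox d s) 0 v2) := by rw [hv2m]; exact hwm
      _ = μ (connEvent ((· + (z + v1)) '' latBox d s) (z + v1) ((z + v1) + v2)) :=
          (measure_conn_shift' hshift (z + v1) s v2).symm
      _ ≤ μ (connEvent (latBox d (2 * r)) (z + v1) ((z + v1) + v2)) :=
          measure_mono (connEvent_mono hin2 _ _)
  have hglue := glue hPA he1 he2
  have hend : (z + v1) + v2 = z + unitv i (2 * s * ζ) := by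
    rw [add_assoc, hsum]
  rw [hend] at hglue
  calc t ^ 2 = t * t := sq t
    _ ≤ _ := hglue

lemma refl_move {μ : Measure ((Fin d → ℤ) → Bool)}
    (hshift : ∀ v : Fin d → ℤ,
      Measure.map (fun ω : (Fin d → ℤ) → Bool => fun x => ω (x + v)) μ = μ)
    {κ : ℝ} (hcross1 : ENNReal.ofReal κ ≤ μ (crossEvent d 1))
    {R : ℕ} {z : Fin d → ℤ} (hz : z ∈ latBox d R) :
    ENNReal.ofReal κ / ((3 ^ d : ℕ) : ENNReal) ≤ μ (connEvent (latBox d R) z z) :=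
  le_trans (site_bound hshift hcross1 z) (measure_mono (connEvent_self hz))

lemma unit_move {μ : Measure ((Fin d → ℤ) → Bool)}
    (hshift : ∀ v : Fin d → ℤ,
      Measure.map (fun ω : (Fin d → ℤ) → Bool => fun x => ω (x + v)) μ = μ)
    (hsym : ∀ σ : Equiv.Perm (Fin d), ∀ ε : Fin d → ℤ, (∀ i, ε i = 1 ∨ ε i = -1) →
      Measure.map
        (fun ω : (Fin d → ℤ) → Bool => fun x => ω (fun i => ε i * x (σ i))) μ = μ)
    {κ : ℝ} (hcross1 : ENNReal.ofReal κ ≤ μ (crossEvent d 1))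
    {r : ℕ} (hr : 1 ≤ r) {z : Fin d → ℤ} (hz : z ∈ latBox d r)
    (j : Fin d) {ζ : ℤ} (hζ : ζ = 1 ∨ ζ = -1) :
    ENNReal.ofReal κ / ((3 ^ (2 * d) : ℕ) : ENNReal)
      ≤ μ (connEvent (latBox d (2 * r)) z (z + unitv j ζ)) := by
  have h0 := unit_bound hshift hsym hcross1 j hζ
  have hsh := measure_conn_shift hshift z {0, unitv j ζ} 0 (unitv j ζ)
  have him : (· + z) '' ({0, unitv j ζ} : Set (Fin d → ℤ)) = {z, z + unitv j ζ} := by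
    rw [Set.image_pair]
    have e1 : (0 : Fin d → ℤ) + z = z := zero_add z
    have e2 : unitv j ζ + z = z + unitv j ζ := add_comm _ _
    rw [e1, e2]
  have e1 : (0 : Fin d → ℤ) + z = z := zero_add z
  rw [him, e1, add_comm (unitv j ζ) z] at hsh
  have hsub : ({z, z + unitv j ζ} : Set (Fin d → ℤ)) ⊆ latBox d (2 * r) := by
    intro u hu
    rcases hu with rfl | hu
    · intro k
      have := hz k
      have h2r : (r : ℤ) ≤ ((2 * r : ℕ) : ℤ) := by push_cast; omega
      omega
    · have hu' : u = z + unitv j ζ := hu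
      subst hu'
      intro k
      have h1 := hz k
      have h2 : |unitv j ζ k| ≤ 1 := by
        by_cases hk : k = j
        · rcases hζ with h | h <;> simp [unitv, hk, h]
        · simp [unitv, hk]
      have h3 : |z k + unitv j ζ k| ≤ |z k| + |unitv j ζ k| := abs_add_le _ _
      have h2r : 1 + (r : ℤ) ≤ ((2 * r : ℕ) : ℤ) := by push_cast; omega
      simp only [Pi.add_apply]
      omega
  calc ENNReal.ofReal κ / ((3 ^ (2 * d) : ℕ) : ENNReal)
      ≤ μ (connEvent {0, unitv j ζ} 0 (unitv j ζ)) := h0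
    _ = μ (connEvent {z, z + unitv j ζ} z (z + unitv j ζ)) := hsh.symm
    _ ≤ μ (connEvent (latBox d (2 * r)) z (z + unitv j ζ)) :=
        measure_mono (connEvent_mono hsub _ _)

lemma decomp {r m : ℕ} (hr : 1 ≤ r) (hm : m ≤ 2 * r) :
    ∃ t s1 s2 s3 : ℕ, t ≤ 2 ∧ s1 ≤ r / 2 ∧ s2 ≤ r / 2 ∧ s3 ≤ r / 2 ∧
      m = t + 2 * (s1 + s2 + s3) := by
  rcases Nat.lt_or_ge r 2 with h | h
  · exact ⟨m, 0, 0, 0, by omega, by omega, by omega, by omega, by omega⟩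
  · exact ⟨m % 2, min (r / 2) (m / 2), min (r / 2) (m / 2 - min (r / 2) (m / 2)),
      m / 2 - min (r / 2) (m / 2) - min (r / 2) (m / 2 - min (r / 2) (m / 2)),
      by omega, by omega, by omega, by omega, by omega⟩

lemma div_mono_denom {κ : ℝ} {N M : ℕ} (h : N ≤ M) :
    ENNReal.ofReal κ / (M : ENNReal) ≤ ENNReal.ofReal κ / (N : ENNReal) :=
  ENNReal.div_le_div_left (by exact_mod_cast Nat.cast_le.mpr h) _

lemma move_coord {μ : Measure ((Fin d → ℤ) → Bool)}
    (hPA : PosAssoc μ)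
    (hshift : ∀ v : Fin d → ℤ,
      Measure.map (fun ω : (Fin d → ℤ) → Bool => fun x => ω (x + v)) μ = μ)
    (hsym : ∀ σ : Equiv.Perm (Fin d), ∀ ε : Fin d → ℤ, (∀ i, ε i = 1 ∨ ε i = -1) →
      Measure.map
        (fun ω : (Fin d → ℤ) → Bool => fun x => ω (fun i => ε i * x (σ i))) μ = μ)
    (hd : 0 < d) {κ : ℝ} (hκ1 : ENNReal.ofReal κ ≤ 1) {r : ℕ} (hr : 1 ≤ r)
    (hcrossAll : ∀ s : ℕ, 1 ≤ s → ENNReal.ofReal κ ≤ μ (crossEvent d s))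
    {z : Fin d → ℤ} (hz : z ∈ latBox d r) (i : Fin d) {c : ℤ} (hc : |c| ≤ (r : ℤ)) :
    (ENNReal.ofReal κ / (((2 * r + 1) ^ (2 * d) : ℕ) : ENNReal)) ^ 8
      ≤ μ (connEvent (latBox d (2 * r)) z (Function.update z i c)) := by
  classical
  set b : ENNReal := ENNReal.ofReal κ / (((2 * r + 1) ^ (2 * d) : ℕ) : ENNReal) with hbdef
  have hb1 : b ≤ 1 := by
    rw [hbdef, ENNReal.div_le_iff_le_mul
      (Or.inl (show (((2 * r + 1) ^ (2 * d) : ℕ) : ENNReal) ≠ 0 from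
        Nat.cast_ne_zero.mpr (by positivity)))
      (Or.inl (ENNReal.natCast_ne_top _))]
    rw [one_mul]
    exact le_trans hκ1 (Nat.one_le_cast.mpr (Nat.one_le_pow _ _ (by omega)))
  -- denominator comparisons
  have hcomp_site : b ≤ ENNReal.ofReal κ / ((3 ^ d : ℕ) : ENNReal) := by
    apply div_mono_denom
    calc 3 ^ d ≤ (2 * r + 1) ^ d := Nat.pow_le_pow_left (by omega) d
      _ ≤ (2 * r + 1) ^ (2 * d) := Nat.pow_le_pow_right (by omega) (by omega)
  have hcomp_unit : b ≤ ENNReal.ofReal κ / ((3 ^ (2 * d) : ℕ) : ENNReal) := by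
    apply div_mono_denom
    exact Nat.pow_le_pow_left (by omega) _
  have hcomp_dbl : ∀ s : ℕ, s ≤ r / 2 →
      b ≤ ENNReal.ofReal κ / (((2 * s + 1) ^ (2 * d) : ℕ) : ENNReal) := by
    intro s hs
    apply div_mono_denom
    exact Nat.pow_le_pow_left (by omega) _
  -- displacement data
  set Δ : ℤ := c - z i with hΔdef
  set m : ℕ := Δ.natAbs with hmdef
  set ζ : ℤ := if 0 ≤ Δ then 1 else -1 with hζdef
  have hζpm : ζ = 1 ∨ ζ = -1 := by
    by_cases h : 0 ≤ Δ <;> simp [hζdef, h]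
  have hΔeq : Δ = ζ * (m : ℤ) := by
    rw [hζdef, hmdef]
    by_cases h : 0 ≤ Δ
    · rw [if_pos h]; omega
    · rw [if_neg h]; omega
  have hzi := abs_le.mp (hz i)
  have hcle := abs_le.mp hc
  have hm2r : m ≤ 2 * r := by
    have : (m : ℤ) ≤ 2 * (r : ℤ) := by
      rcases hζpm with h | h <;> rw [h] at hΔeq <;> omega
    exact_mod_cast this
  obtain ⟨t, s1, s2, s3, ht, hs1, hs2, hs3, hmt⟩ := decomp hr hm2r
  -- intermediate points
  set pt : ℕ → (Fin d → ℤ) := fun a => z + unitv i (ζ * a) with hptdef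
  have hpt_apply : ∀ (a : ℕ) (k : Fin d),
      pt a k = z k + (if k = i then ζ * (a : ℤ) else 0) := by
    intro a k
    rfl
  have hpt0 : pt 0 = z := by
    funext k
    rw [hpt_apply]
    by_cases hk : k = i
    · rw [if_pos hk]; push_cast; ring
    · rw [if_neg hk]; ring
  have hptm : pt m = Function.update z i c := by
    funext k
    rw [hpt_apply, Function.update_apply]
    by_cases hk : k = i
    · rw [if_pos hk, if_pos hk, hk, ← hΔeq, hΔdef]; ring
    · rw [if_neg hk, if_neg hk]; ring
  have hptbox : ∀ a : ℕ, a ≤ m → pt a ∈ latBox d r := by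
    intro a ha k
    show |pt a k| ≤ (r : ℤ)
    rw [hpt_apply]
    by_cases hk : k = i
    · rw [if_pos hk, hk, abs_le]
      have ham : (a : ℤ) ≤ (m : ℤ) := by exact_mod_cast ha
      have ha0 : (0 : ℤ) ≤ (a : ℤ) := by positivity
      rcases hζpm with h | h <;> rw [h] at hΔeq ⊢ <;> constructor <;> omega
    · rw [if_neg hk, add_zero]
      exact hz k
  -- elementary steps
  have hstep_unit : ∀ a : ℕ, a + 1 ≤ m →
      b ≤ μ (connEvent (latBox d (2 * r)) (pt a) (pt (a + 1))) := by
    intro a ha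
    have hp : pt (a + 1) = pt a + unitv i ζ := by
      funext k
      have h2 : (pt a + unitv i ζ) k = pt a k + (if k = i then ζ else 0) := rfl
      rw [h2, hpt_apply, hpt_apply]
      by_cases hk : k = i
      · rw [if_pos hk, if_pos hk, if_pos hk]; push_cast; ring
      · rw [if_neg hk, if_neg hk, if_neg hk]; ring
    rw [hp]
    exact le_trans hcomp_unit
      (unit_move hshift hsym (hcrossAll 1 le_rfl) hr (hptbox a (by omega)) i hζpm)
  have hstep_dbl : ∀ a s : ℕ, s ≤ r / 2 → a + 2 * s ≤ m →
      b ^ 2 ≤ μ (connEvent (latBox d (2 * r)) (pt a) (pt (a + 2 * s))) := by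
    intro a s hsr2 ham
    rcases Nat.eq_zero_or_pos s with rfl | hspos
    · have hpp : pt (a + 2 * 0) = pt a := by norm_num
      rw [hpp]
      have hsite : b ≤ μ (connEvent (latBox d (2 * r)) (pt a) (pt a)) := by
        refine le_trans hcomp_site (refl_move hshift (hcrossAll 1 le_rfl) ?_)
        intro k
        have h5 := (hptbox a (by omega)) k
        have h2r : (r : ℤ) ≤ ((2 * r : ℕ) : ℤ) := by push_cast; omega
        omega
      calc b ^ 2 = b * b := sq b
        _ ≤ 1 * b := mul_le_mul' hb1 le_rfl
        _ = b := one_mul b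
        _ ≤ _ := hsite
    · have hp : pt (a + 2 * s) = pt a + unitv i (2 * s * ζ) := by
        funext k
        have h2 : (pt a + unitv i (2 * s * ζ)) k
            = pt a k + (if k = i then 2 * (s : ℤ) * ζ else 0) := rfl
        rw [h2, hpt_apply, hpt_apply]
        by_cases hk : k = i
        · rw [if_pos hk, if_pos hk, if_pos hk]; push_cast; ring
        · rw [if_neg hk, if_neg hk, if_neg hk]; ring
      rw [hp]
      have hdm := double_move hPA hshift hsym hd hspos (by omega)
        (hcrossAll s hspos) (hptbox a (by omega)) i hζpm
      exact le_trans (pow_le_pow_left' (hcomp_dbl s hsr2) 2) hdm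
  -- assemble: t unit steps then three double steps
  have h0 : b ^ 2 ≤ μ (connEvent (latBox d (2 * r)) (pt 0) (pt t)) := by
    interval_cases t
    · have hsite : b ≤ μ (connEvent (latBox d (2 * r)) (pt 0) (pt 0)) := by
        refine le_trans hcomp_site (refl_move hshift (hcrossAll 1 le_rfl) ?_)
        intro k
        have := (hptbox 0 (by omega)) k
        have h2r : (r : ℤ) ≤ ((2 * r : ℕ) : ℤ) := by push_cast; omega
        omega
      calc b ^ 2 = b * b := sq b
        _ ≤ 1 * b := mul_le_mul' hb1 le_rfl
        _ = b := one_mul b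
        _ ≤ _ := hsite
    · have h01 := hstep_unit 0 (by omega)
      norm_num at h01
      calc b ^ 2 = b * b := sq b
        _ ≤ 1 * b := mul_le_mul' hb1 le_rfl
        _ = b := one_mul b
        _ ≤ _ := h01
    · have h01 := hstep_unit 0 (by omega)
      have h12 := hstep_unit 1 (by omega)
      norm_num at h01 h12
      have := glue hPA h01 h12
      calc b ^ 2 = b * b := sq b
        _ ≤ _ := this
  have h1 := hstep_dbl t s1 hs1 (by omega)
  have h2 := hstep_dbl (t + 2 * s1) s2 hs2 (by omega)
  have h3 := hstep_dbl (t + 2 * s1 + 2 * s2) s3 hs3 (by omega)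
  have hfin := glue hPA (glue hPA (glue hPA h0 h1) h2) h3
  have hidx : t + 2 * s1 + 2 * s2 + 2 * s3 = m := by omega
  rw [hidx, hpt0, hptm] at hfin
  calc b ^ 8 = b ^ 2 * b ^ 2 * b ^ 2 * b ^ 2 := by ring
    _ ≤ _ := hfin

lemma connect_all {μ : Measure ((Fin d → ℤ) → Bool)}
    (hPA : PosAssoc μ)
    (hshift : ∀ v : Fin d → ℤ,
      Measure.map (fun ω : (Fin d → ℤ) → Bool => fun x => ω (x + v)) μ = μ)
    (hsym : ∀ σ : Equiv.Perm (Fin d), ∀ ε : Fin d → ℤ, (∀ i, ε i = 1 ∨ ε i = -1) →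
      Measure.map
        (fun ω : (Fin d → ℤ) → Bool => fun x => ω (fun i => ε i * x (σ i))) μ = μ)
    (hd : 0 < d) {κ : ℝ} (hκ1 : ENNReal.ofReal κ ≤ 1) {r : ℕ} (hr : 1 ≤ r)
    (hcrossAll : ∀ s : ℕ, 1 ≤ s → ENNReal.ofReal κ ≤ μ (crossEvent d s)) :
    ∀ n : ℕ, ∀ x y : Fin d → ℤ, x ∈ latBox d r → y ∈ latBox d r →
      (Finset.univ.filter (fun i => x i ≠ y i)).card ≤ n →
      (ENNReal.ofReal κ / (((2 * r + 1) ^ (2 * d) : ℕ) : ENNReal)) ^ (8 * n + 1)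
        ≤ μ (connEvent (latBox d (2 * r)) x y) := by
  classical
  set b : ENNReal := ENNReal.ofReal κ / (((2 * r + 1) ^ (2 * d) : ℕ) : ENNReal) with hbdef
  have hb1 : b ≤ 1 := by
    rw [hbdef, ENNReal.div_le_iff_le_mul
      (Or.inl (show (((2 * r + 1) ^ (2 * d) : ℕ) : ENNReal) ≠ 0 from
        Nat.cast_ne_zero.mpr (by positivity)))
      (Or.inl (ENNReal.natCast_ne_top _))]
    rw [one_mul]
    exact le_trans hκ1 (Nat.one_le_cast.mpr (Nat.one_le_pow _ _ (by omega)))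
  have hcomp_site : b ≤ ENNReal.ofReal κ / ((3 ^ d : ℕ) : ENNReal) := by
    apply div_mono_denom
    calc 3 ^ d ≤ (2 * r + 1) ^ d := Nat.pow_le_pow_left (by omega) d
      _ ≤ (2 * r + 1) ^ (2 * d) := Nat.pow_le_pow_right (by omega) (by omega)
  intro n
  induction n with
  | zero =>
    intro x y hx hy hcard
    have hxy : x = y := by
      funext k
      by_contra hk
      have hmem : k ∈ Finset.univ.filter (fun i => x i ≠ y i) := by
        simp [Finset.mem_filter, hk]
      have : (Finset.univ.filter (fun i => x i ≠ y i)) = ∅ :=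
        Finset.card_eq_zero.mp (Nat.le_zero.mp hcard)
      rw [this] at hmem
      simp at hmem
    subst hxy
    have hx2 : x ∈ latBox d (2 * r) := by
      intro k
      have := hx k
      have h2r : (r : ℤ) ≤ ((2 * r : ℕ) : ℤ) := by push_cast; omega
      omega
    calc b ^ (8 * 0 + 1) = b := by rw [pow_one]
      _ ≤ ENNReal.ofReal κ / ((3 ^ d : ℕ) : ENNReal) := hcomp_site
      _ ≤ μ (connEvent (latBox d (2 * r)) x x) :=
          refl_move hshift (hcrossAll 1 le_rfl) hx2
  | succ n ih =>
    intro x y hx hy hcard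
    by_cases hcard' : (Finset.univ.filter (fun i => x i ≠ y i)).card ≤ n
    · have hih := ih x y hx hy hcard'
      calc b ^ (8 * (n + 1) + 1) = b ^ (8 * n + 1) * b ^ 8 := by
            rw [← pow_add]; ring_nf
        _ ≤ b ^ (8 * n + 1) * 1 := mul_le_mul' le_rfl (pow_le_one' hb1 8)
        _ = b ^ (8 * n + 1) := mul_one _
        _ ≤ _ := hih
    · have hpos : 0 < (Finset.univ.filter (fun i => x i ≠ y i)).card := by omega
      obtain ⟨i, hi⟩ := Finset.card_pos.mp hpos
      have hxiyi : x i ≠ y i := (Finset.mem_filter.mp hi).2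
      set x' := Function.update x i (y i) with hx'def
      have hx' : x' ∈ latBox d r := by
        intro k
        rw [hx'def, Function.update_apply]
        by_cases hk : k = i
        · rw [if_pos hk]; exact hy i
        · rw [if_neg hk]; exact hx k
      have hsub : Finset.univ.filter (fun k => x' k ≠ y k)
          ⊆ (Finset.univ.filter (fun k => x k ≠ y k)).erase i := by
        intro k hk
        rw [Finset.mem_filter] at hk
        have hki : k ≠ i := by
          intro hc
          apply hk.2
          rw [hc, hx'def]
          simp
        refine Finset.mem_erase.mpr ⟨hki, Finset.mem_filter.mpr ⟨Finset.mem_univ _, ?_⟩⟩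
        intro hc
        apply hk.2
        rw [hx'def, Function.update_apply, if_neg hki]
        exact hc
      have hcard'' : (Finset.univ.filter (fun k => x' k ≠ y k)).card ≤ n := by
        have h1 := Finset.card_le_card hsub
        have h2 : ((Finset.univ.filter (fun k => x k ≠ y k)).erase i).card
            = (Finset.univ.filter (fun k => x k ≠ y k)).card - 1 :=
          Finset.card_erase_of_mem hi
        omega
      have hmove : b ^ 8 ≤ μ (connEvent (latBox d (2 * r)) x x') := by
        rw [hx'def]
        exact move_coord hPA hshift hsym hd hκ1 hr hcrossAll hx i (abs_le.mpr (abs_le.mp (hy i)))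
      have hih := ih x' y hx' hy hcard''
      have hglue := glue hPA hmove hih
      calc b ^ (8 * (n + 1) + 1) = b ^ 8 * b ^ (8 * n + 1) := by
            rw [← pow_add]; ring_nf
        _ ≤ _ := hglue

end TP

/-- polynomial lower bound on two-point connection probabilities inside
`B_{2r}`, for positively associated, translation- and lattice-symmetry-invariant
probability measures with uniformly non-degenerate box-to-sphere crossings. -/
theorem two_point_polynomial_lower_bound (d : ℕ) (hd : 2 ≤ d) :
    ∃ C : ℝ, ∀ κ : ℝ, 0 < κ → ∃ c : ℝ, 0 < c ∧
      ∀ μ : Measure ((Fin d → ℤ) → Bool), IsProbabilityMeasure μ → PosAssoc μ →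
        (∀ v : Fin d → ℤ,
          Measure.map (fun ω : (Fin d → ℤ) → Bool => fun x => ω (x + v)) μ = μ) →
        (∀ σ : Equiv.Perm (Fin d), ∀ ε : Fin d → ℤ, (∀ i, ε i = 1 ∨ ε i = -1) →
          Measure.map
            (fun ω : (Fin d → ℤ) → Bool => fun x => ω (fun i => ε i * x (σ i))) μ = μ) →
        (∀ r : ℕ, 1 ≤ r → ENNReal.ofReal κ ≤ μ (crossEvent d r)) →
        ∀ r : ℕ, 1 ≤ r → ∀ x y : Fin d → ℤ, x ∈ latBox d r → y ∈ latBox d r →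
          ENNReal.ofReal (c * (r : ℝ) ^ (-C)) ≤ μ (connEvent (latBox d (2 * r)) x y) := by
  refine ⟨((2 * d * (8 * d + 1) : ℕ) : ℝ), ?_⟩
  intro κ hκ
  refine ⟨(min κ 1) ^ (8 * d + 1) / 3 ^ (2 * d * (8 * d + 1)),
    by have := lt_min hκ one_pos; positivity, ?_⟩
  intro μ hprob hPA hshift hsym hcross r hr x y hx hy
  have hd0 : 0 < d := by omega
  have hκ'pos : 0 < min κ 1 := lt_min hκ one_pos
  have hκ'le1 : min κ 1 ≤ 1 := min_le_right _ _
  have hcross' : ∀ s : ℕ, 1 ≤ s → ENNReal.ofReal (min κ 1) ≤ μ (crossEvent d s) :=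
    fun s hs => le_trans (ENNReal.ofReal_le_ofReal (min_le_left _ _)) (hcross s hs)
  have hκ1E : ENNReal.ofReal (min κ 1) ≤ 1 := by
    rw [← ENNReal.ofReal_one]
    exact ENNReal.ofReal_le_ofReal hκ'le1
  have hcard : (Finset.univ.filter (fun i => x i ≠ y i)).card ≤ d := by
    calc (Finset.univ.filter (fun i => x i ≠ y i)).card
        ≤ Finset.univ.card := Finset.card_filter_le _ _
      _ = d := by simp
  have hmain := TP.connect_all hPA hshift hsym hd0 hκ1E hr hcross' d x y hx hy hcard
  refine le_trans ?_ hmain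
  have hb_eq : ENNReal.ofReal (min κ 1) / (((2 * r + 1) ^ (2 * d) : ℕ) : ENNReal)
      = ENNReal.ofReal (min κ 1 / (2 * (r : ℝ) + 1) ^ (2 * d)) := by
    rw [ENNReal.ofReal_div_of_pos (by positivity)]
    congr 1
    rw [show ((2 * (r : ℝ) + 1) ^ (2 * d)) = ((((2 * r + 1) ^ (2 * d) : ℕ) : ℝ)) by
      push_cast; ring]
    exact (ENNReal.ofReal_natCast _).symm
  rw [hb_eq, ← ENNReal.ofReal_pow (by positivity)]
  apply ENNReal.ofReal_le_ofReal
  have hrpos : (0 : ℝ) < (r : ℝ) := by exact_mod_cast hr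
  have hr1 : (1 : ℝ) ≤ (r : ℝ) := by exact_mod_cast hr
  rw [show (-(((2 * d * (8 * d + 1) : ℕ) : ℝ))) = -((2 * d * (8 * d + 1) : ℕ) : ℝ) from rfl]
  rw [Real.rpow_neg (le_of_lt hrpos), Real.rpow_natCast]
  rw [div_pow, ← pow_mul]
  have hexp : 2 * d * (8 * d + 1) = 2 * d * (8 * d + 1) := rfl
  calc (min κ 1) ^ (8 * d + 1) / 3 ^ (2 * d * (8 * d + 1))
        * ((r : ℝ) ^ (2 * d * (8 * d + 1)))⁻¹
      = (min κ 1) ^ (8 * d + 1)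
          / ((3 : ℝ) ^ (2 * d * (8 * d + 1)) * (r : ℝ) ^ (2 * d * (8 * d + 1))) := by
        field_simp
    _ = (min κ 1) ^ (8 * d + 1) / ((3 * (r : ℝ)) ^ (2 * d * (8 * d + 1))) := by
        rw [mul_pow]
    _ ≤ (min κ 1) ^ (8 * d + 1) / ((2 * (r : ℝ) + 1) ^ (2 * d * (8 * d + 1))) := by
        apply div_le_div_of_nonneg_left (by positivity) (by positivity)
        apply pow_le_pow_left₀ (by positivity)
        nlinarith
end

section
/- Let d ≥ 1 and let ω, ω' ∈ {0,1}^{ℤ^d} satisfy ω ≤ ω' pointwise. Let r_0 ≥ 1 and M be positive integers, let K ≥ 0 be an integer, and set r_k = 2^k r_0 for 0 ≤ k ≤ K. Assume that r_0 ≤ M ≤ r_K/10, that Exist(r_k, ω) holds for every 0 ≤ k ≤ K, and that Unique(r_k, ω, ω') holds for every 0 ≤ k ≤ K. Then O(ω') contains a connected set intersecting both B_{r_0} and ∂B_M; in particular, some nearest-neighbor path of ω'-open sites joins B_{r_0} to ∂B_M. -/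
/-- The `ℓ∞`-diameter of `A` is at least `ρ`. -/
def diamGE {d : ℕ} (A : Set (Fin d → ℤ)) (ρ : ℝ) : Prop :=
  ∃ x ∈ A, ∃ y ∈ A, ∃ i, ρ ≤ |(x i : ℝ) - (y i : ℝ)|

/-- `Exist(r, ω)`: `O(ω) ∩ B_r` contains a connected subset of `ℓ∞`-diameter at least `r/5`. -/
def ExistEv (d r : ℕ) (ω : (Fin d → ℤ) → Bool) : Prop :=
  ∃ A : Set (Fin d → ℤ), A ⊆ openSites ω ∩ latBox d r ∧ LatConn A ∧ diamGE A ((r : ℝ) / 5)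

/-- `A` is a connected component of `S`: a maximal nonempty connected subset of `S`. -/
def IsCompOf {d : ℕ} (A S : Set (Fin d → ℤ)) : Prop :=
  A ⊆ S ∧ A.Nonempty ∧ LatConn A ∧
    ∀ A' : Set (Fin d → ℤ), A ⊆ A' → A' ⊆ S → LatConn A' → A' = A

/-- `Unique(r, ω, ω')`: any two connected components of `O(ω) ∩ B_r` of `ℓ∞`-diameter at
least `r/10` are intersected by a common connected subset of `O(ω') ∩ B_{2r}`. -/
def UniqueEv (d r : ℕ) (ω ω' : (Fin d → ℤ) → Bool) : Prop :=
  ∀ A₁ A₂ : Set (Fin d → ℤ),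
    IsCompOf A₁ (openSites ω ∩ latBox d r) → IsCompOf A₂ (openSites ω ∩ latBox d r) →
    diamGE A₁ ((r : ℝ) / 10) → diamGE A₂ ((r : ℝ) / 10) →
    ∃ B : Set (Fin d → ℤ), B ⊆ openSites ω' ∩ latBox d (2 * r) ∧ LatConn B ∧
      (B ∩ A₁).Nonempty ∧ (B ∩ A₂).Nonempty

namespace GlueAux

open Relation

variable {d : ℕ}

def Radj (S : Set (Fin d → ℤ)) (a b : Fin d → ℤ) : Prop :=
  nnAdj a b ∧ a ∈ S ∧ b ∈ S

lemma nnAdj_symm {x y : Fin d → ℤ} (h : nnAdj x y) : nnAdj y x := by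
  unfold nnAdj at *
  rw [← h]
  exact Finset.sum_congr rfl (fun i _ => by ring)

lemma radj_symm {S : Set (Fin d → ℤ)} {a b} (h : Radj S a b) : Radj S b a :=
  ⟨nnAdj_symm h.1, h.2.2, h.2.1⟩

lemma rtg_symm {S : Set (Fin d → ℤ)} {a b} (h : ReflTransGen (Radj S) a b) :
    ReflTransGen (Radj S) b a := by
  induction h with
  | refl => exact .refl
  | tail _ h ih => exact (ReflTransGen.single (radj_symm h)).trans ih

lemma rtg_mem_right {S : Set (Fin d → ℤ)} {a b} (h : ReflTransGen (Radj S) a b)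
    (ha : a ∈ S) : b ∈ S := by
  induction h with
  | refl => exact ha
  | tail _ h _ => exact h.2.2

lemma list_to_rtg {S : Set (Fin d → ℤ)} :
    ∀ l : List (Fin d → ℤ), l.Chain' nnAdj → (∀ z ∈ l, z ∈ S) →
    ∀ x y, l.head? = some x → l.getLast? = some y → ReflTransGen (Radj S) x y := by
  intro l
  induction l with
  | nil => simp
  | cons a t ih =>
    intro hc hm x y hh hl
    simp only [List.head?_cons, Option.some.injEq] at hh
    subst hh
    cases t with
    | nil =>
      simp only [List.getLast?_singleton, Option.some.injEq] at hl
      subst hl; exact .refl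
    | cons b t' =>
      rw [List.Chain', List.isChain_cons_cons] at hc
      rw [List.getLast?_cons_cons] at hl
      have hb : ReflTransGen (Radj S) b y :=
        ih hc.2 (fun z hz => hm z (List.mem_cons_of_mem _ hz)) b y rfl hl
      exact (ReflTransGen.single ⟨hc.1, hm a (by simp), hm b (by simp)⟩).trans hb

lemma rtg_to_list {S : Set (Fin d → ℤ)} {x y} (hx : x ∈ S)
    (h : ReflTransGen (Radj S) x y) :
    ∃ l : List (Fin d → ℤ), l.Chain' nnAdj ∧ l.head? = some x ∧ l.getLast? = some y ∧
      ∀ z ∈ l, z ∈ S := by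
  induction h with
  | refl => exact ⟨[x], List.isChain_singleton _, by simp, by simp, by simpa using hx⟩
  | @tail b c _ h ih =>
    obtain ⟨l, hc, hh, hl, hmem⟩ := ih
    cases l with
    | nil => simp at hh
    | cons a t =>
      simp only [List.head?_cons, Option.some.injEq] at hh
      refine ⟨(a :: t) ++ [c], ?_, by simp [hh], by rw [List.getLast?_concat], ?_⟩
      · rw [List.Chain', List.isChain_append]
        refine ⟨hc, by simp, ?_⟩
        intro u hu v hv
        simp only [List.head?_cons, Option.mem_def, Option.some.injEq] at hv
        rw [hl] at hu
        simp only [Option.mem_def, Option.some.injEq] at hu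
        subst hu; subst hv; exact h.1
      · intro z hz
        rcases List.mem_append.mp hz with hz | hz
        · exact hmem z hz
        · simp only [List.mem_singleton] at hz; subst hz; exact h.2.2

lemma latConn_iff {A : Set (Fin d → ℤ)} :
    LatConn A ↔ ∀ x ∈ A, ∀ y ∈ A, ReflTransGen (Radj A) x y := by
  constructor
  · intro h x hx y hy
    obtain ⟨l, hc, hh, hl, hm⟩ := h x hx y hy
    exact list_to_rtg l hc hm x y hh hl
  · intro h x hx y hy
    exact rtg_to_list hx (h x hx y hy)


def compSet (A S : Set (Fin d → ℤ)) : Set (Fin d → ℤ) :=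
  {z | ∃ a ∈ A, ReflTransGen (Radj S) a z}

lemma rtg_compSet {A S : Set (Fin d → ℤ)} {a z} (ha : a ∈ A)
    (h : ReflTransGen (Radj S) a z) : ReflTransGen (Radj (compSet A S)) a z := by
  induction h with
  | refl => exact .refl
  | tail hab h ih =>
    exact ih.tail ⟨h.1, ⟨a, ha, hab⟩, ⟨a, ha, hab.tail h⟩⟩

lemma radj_mono {A B : Set (Fin d → ℤ)} (h : A ⊆ B) {x y} (hr : Radj A x y) :
    Radj B x y := ⟨hr.1, h hr.2.1, h hr.2.2⟩

lemma exists_comp {A S : Set (Fin d → ℤ)} (hAS : A ⊆ S) (hne : A.Nonempty)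
    (hconn : LatConn A) : ∃ C, IsCompOf C S ∧ A ⊆ C := by
  set C := compSet A S with hCdef
  have hsubC : A ⊆ C := fun a ha => ⟨a, ha, .refl⟩
  have hCS : C ⊆ S := by
    rintro z ⟨a, ha, h⟩
    exact rtg_mem_right h (hAS ha)
  have hconnC : LatConn C := by
    rw [latConn_iff]
    rintro x ⟨a, ha, hax⟩ y ⟨b, hb, hby⟩
    have h1 : ReflTransGen (Radj C) x a := rtg_symm (rtg_compSet ha hax)
    have h2 : ReflTransGen (Radj C) a b :=
      ReflTransGen.mono (fun _ _ hr => radj_mono hsubC hr) _ _ (latConn_iff.mp hconn a ha b hb)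
    exact (h1.trans h2).trans (rtg_compSet hb hby)
  refine ⟨C, ⟨hCS, hne.mono hsubC, hconnC, ?_⟩, hsubC⟩
  intro A' hCA' hA'S hconnA'
  refine Set.Subset.antisymm ?_ hCA'
  intro z hz
  obtain ⟨a, ha⟩ := hne
  obtain ⟨l, hc, hh, hl, hm⟩ := hconnA' a (hCA' (hsubC ha)) z hz
  exact ⟨a, ha, list_to_rtg l hc (fun w hw => hA'S (hm w hw)) a z hh hl⟩

lemma latConn_union {U V : Set (Fin d → ℤ)} (hU : LatConn U) (hV : LatConn V)
    (h : (U ∩ V).Nonempty) : LatConn (U ∪ V) := by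
  rw [latConn_iff] at *
  obtain ⟨z, hzU, hzV⟩ := h
  have hUm : ∀ {x y}, x ∈ U → y ∈ U → ReflTransGen (Radj (U ∪ V)) x y :=
    fun hx hy => ReflTransGen.mono (fun _ _ hr => radj_mono Set.subset_union_left hr) _ _ (hU _ hx _ hy)
  have hVm : ∀ {x y}, x ∈ V → y ∈ V → ReflTransGen (Radj (U ∪ V)) x y :=
    fun hx hy => ReflTransGen.mono (fun _ _ hr => radj_mono Set.subset_union_right hr) _ _ (hV _ hx _ hy)
  rintro x (hx | hx) y (hy | hy)
  · exact hUm hx hy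
  · exact (hUm hx hzU).trans (hVm hzV hy)
  · exact (hVm hx hzV).trans (hUm hzU hy)
  · exact hVm hx hy

lemma diamGE_mono {A B : Set (Fin d → ℤ)} (h : A ⊆ B) {ρ} (hd : diamGE A ρ) :
    diamGE B ρ := by
  obtain ⟨x, hx, y, hy, i, hi⟩ := hd
  exact ⟨x, h hx, y, h hy, i, hi⟩

lemma diamGE_anti {A : Set (Fin d → ℤ)} {ρ ρ' : ℝ} (h : ρ' ≤ ρ) (hd : diamGE A ρ) :
    diamGE A ρ' := by
  obtain ⟨x, hx, y, hy, i, hi⟩ := hd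
  exact ⟨x, hx, y, hy, i, h.trans hi⟩

lemma nnAdj_coord {z w : Fin d → ℤ} (h : nnAdj z w) (i : Fin d) : |z i - w i| ≤ 1 := by
  have h1 : (z i - w i) ^ 2 ≤ 1 := by
    rw [← h]
    exact Finset.single_le_sum (f := fun j => (z j - w j) ^ 2)
      (fun j _ => sq_nonneg _) (Finset.mem_univ i)
  nlinarith [abs_nonneg (z i - w i), sq_abs (z i - w i)]

lemma ivt_list (f : (Fin d → ℤ) → ℤ) (m : ℤ) :
    ∀ l : List (Fin d → ℤ), l.Chain' (fun a b => f b ≤ f a + 1) →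
    ∀ x y, l.head? = some x → l.getLast? = some y → f x ≤ m → m ≤ f y →
    ∃ z ∈ l, f z = m := by
  intro l
  induction l with
  | nil => simp
  | cons a t ih =>
    intro hc x y hh hl hx hy
    simp only [List.head?_cons, Option.some.injEq] at hh
    subst hh
    cases t with
    | nil =>
      simp only [List.getLast?_singleton, Option.some.injEq] at hl
      subst hl
      exact ⟨a, by simp, le_antisymm hx hy⟩
    | cons b t' =>
      by_cases hm : f a = m
      · exact ⟨a, by simp, hm⟩
      · rw [List.Chain', List.isChain_cons_cons] at hc
        rw [List.getLast?_cons_cons] at hl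
        obtain ⟨z, hz, hzm⟩ := ih hc.2 b y rfl hl (by omega) hy
        exact ⟨z, List.mem_cons_of_mem _ hz, hzm⟩


end GlueAux

/-- existence and uniqueness at all dyadic scales `r_k = 2^k r₀` up to
`r_K ≥ 10 M` produce, in the sprinkled configuration `ω'`, a connected open set joining
`B_{r₀}` to `∂B_M`; in particular an `ω'`-open nearest-neighbor path joins them. -/
theorem glue_scales_to_crossing (d : ℕ) (hd : 1 ≤ d)
    (ω ω' : (Fin d → ℤ) → Bool) (hle : ∀ x, ω x ≤ ω' x)
    (r₀ M : ℕ) (hr₀ : 1 ≤ r₀) (hM : 1 ≤ M) (K : ℕ)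
    (hlow : r₀ ≤ M) (hhigh : 10 * M ≤ 2 ^ K * r₀)
    (hex : ∀ k ≤ K, ExistEv d (2 ^ k * r₀) ω)
    (hun : ∀ k ≤ K, UniqueEv d (2 ^ k * r₀) ω ω') :
    (∃ A : Set (Fin d → ℤ), A ⊆ openSites ω' ∧ LatConn A ∧
      (A ∩ latBox d r₀).Nonempty ∧ (A ∩ latSphere d M).Nonempty) ∧
    (∃ l : List (Fin d → ℤ), l.Chain' nnAdj ∧ (∀ z ∈ l, z ∈ openSites ω') ∧
      (∃ x ∈ l, x ∈ latBox d r₀) ∧ (∃ y ∈ l, y ∈ latSphere d M)) := by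
  classical
  have hFin : (Finset.univ : Finset (Fin d)).Nonempty :=
    ⟨⟨0, by omega⟩, Finset.mem_univ _⟩
  -- open sites monotone
  have hOs : openSites ω ⊆ openSites ω' := by
    intro x hx
    have h := hle x
    simp only [openSites, Set.mem_setOf_eq] at hx ⊢
    rw [hx] at h
    revert h; cases ω' x <;> simp
  have hBoxMono : ∀ {r r' : ℕ}, r ≤ r' → latBox d r ⊆ latBox d r' := by
    intro r r' hrr x hx i
    exact (hx i).trans (by exact_mod_cast hrr)
  -- main induction on scales
  have main : ∀ k, k ≤ K → ∃ U C : Set (Fin d → ℤ),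
      U ⊆ openSites ω' ∧ LatConn U ∧ (U ∩ latBox d r₀).Nonempty ∧ C ⊆ U ∧
      IsCompOf C (openSites ω ∩ latBox d (2 ^ k * r₀)) ∧
      diamGE C (((2 ^ k * r₀ : ℕ) : ℝ) / 5) := by
    intro k
    induction k with
    | zero =>
      intro _
      obtain ⟨A, hAsub, hAconn, hAdiam⟩ := hex 0 (Nat.zero_le K)
      have hAne : A.Nonempty := by
        obtain ⟨x, hx, -⟩ := hAdiam; exact ⟨x, hx⟩
      obtain ⟨C, hcomp, hAC⟩ := GlueAux.exists_comp hAsub hAne hAconn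
      refine ⟨C, C, ?_, hcomp.2.2.1, ?_, subset_rfl, hcomp,
        GlueAux.diamGE_mono hAC hAdiam⟩
      · intro z hz
        exact hOs (hcomp.1 hz).1
      · obtain ⟨c, hc⟩ := hcomp.2.1
        refine ⟨c, hc, ?_⟩
        have : (2 : ℕ) ^ 0 * r₀ = r₀ := by norm_num
        exact this ▸ (hcomp.1 hc).2
    | succ k ihk =>
      intro hk1
      obtain ⟨U, C, hUO, hUconn, hUbox, hCU, hCcomp, hCdiam⟩ := ihk (by omega)
      obtain ⟨A', hA'sub, hA'conn, hA'diam⟩ := hex (k + 1) hk1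
      have hA'ne : A'.Nonempty := by
        obtain ⟨x, hx, -⟩ := hA'diam; exact ⟨x, hx⟩
      obtain ⟨C', hC'comp, hA'C'⟩ := GlueAux.exists_comp hA'sub hA'ne hA'conn
      have hrr : 2 ^ k * r₀ ≤ 2 ^ (k + 1) * r₀ :=
        Nat.mul_le_mul_right r₀ (Nat.pow_le_pow_right (by norm_num) (Nat.le_succ k))
      have hCsub' : C ⊆ openSites ω ∩ latBox d (2 ^ (k + 1) * r₀) := by
        intro z hz
        exact ⟨(hCcomp.1 hz).1, hBoxMono hrr (hCcomp.1 hz).2⟩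
      obtain ⟨D, hDcomp, hCD⟩ := GlueAux.exists_comp hCsub' hCcomp.2.1 hCcomp.2.2.1
      have harith : ((2 ^ (k + 1) * r₀ : ℕ) : ℝ) / 10 = ((2 ^ k * r₀ : ℕ) : ℝ) / 5 := by
        push_cast; ring
      have hDdiam : diamGE D (((2 ^ (k + 1) * r₀ : ℕ) : ℝ) / 10) := by
        rw [harith]; exact GlueAux.diamGE_mono hCD hCdiam
      have hC'diam10 : diamGE C' (((2 ^ (k + 1) * r₀ : ℕ) : ℝ) / 10) := by
        refine GlueAux.diamGE_anti ?_ (GlueAux.diamGE_mono hA'C' hA'diam)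
        have : (0 : ℝ) ≤ ((2 ^ (k + 1) * r₀ : ℕ) : ℝ) := Nat.cast_nonneg _
        linarith
      obtain ⟨Bs, hBsub, hBconn, hBD, hBC'⟩ :=
        hun (k + 1) hk1 D C' hDcomp hC'comp hDdiam hC'diam10
      obtain ⟨c0, hc0⟩ := hCcomp.2.1
      refine ⟨((U ∪ D) ∪ Bs) ∪ C', C', ?_, ?_, ?_,
        fun z hz => Or.inr hz, hC'comp, GlueAux.diamGE_mono hA'C' hA'diam⟩
      · rintro z (((hz | hz) | hz) | hz)
        · exact hUO hz
        · exact hOs (hDcomp.1 hz).1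
        · exact (hBsub hz).1
        · exact hOs (hC'comp.1 hz).1
      · have h1 : LatConn (U ∪ D) :=
          GlueAux.latConn_union hUconn hDcomp.2.2.1 ⟨c0, hCU hc0, hCD hc0⟩
        have h2 : LatConn ((U ∪ D) ∪ Bs) := by
          obtain ⟨z, hzB, hzD⟩ := hBD
          exact GlueAux.latConn_union h1 hBconn ⟨z, Or.inr hzD, hzB⟩
        obtain ⟨z, hzB, hzC'⟩ := hBC'
        exact GlueAux.latConn_union h2 hC'comp.2.2.1 ⟨z, Or.inr hzB, hzC'⟩
      · obtain ⟨q, hqU, hqbox⟩ := hUbox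
        exact ⟨q, Or.inl (Or.inl (Or.inl hqU)), hqbox⟩
  -- conclude
  obtain ⟨U, C, hUO, hUconn, hUbox, hCU, hCcomp, hCdiam⟩ := main K le_rfl
  have hUdiam : diamGE U ((2 * M : ℕ) : ℝ) := by
    refine GlueAux.diamGE_anti ?_ (GlueAux.diamGE_mono hCU hCdiam)
    have h10 : ((10 * M : ℕ) : ℝ) ≤ ((2 ^ K * r₀ : ℕ) : ℝ) := by exact_mod_cast hhigh
    push_cast at h10 ⊢
    linarith
  obtain ⟨x, hxU, y, hyU, i, hxy⟩ := hUdiam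
  -- one of x, y has |·|_i ≥ M
  have habs : (M : ℝ) ≤ |(x i : ℝ)| ∨ (M : ℝ) ≤ |(y i : ℝ)| := by
    by_contra hcon
    push_neg at hcon
    have h1 : |(x i : ℝ) - (y i : ℝ)| ≤ |(x i : ℝ)| + |(y i : ℝ)| := by
      calc |(x i : ℝ) - (y i : ℝ)| = |(x i : ℝ) + -(y i : ℝ)| := by ring_nf
        _ ≤ |(x i : ℝ)| + |(-(y i : ℝ))| := abs_add_le _ _
        _ = |(x i : ℝ)| + |(y i : ℝ)| := by rw [abs_neg]
    have : ((2 * M : ℕ) : ℝ) = 2 * (M : ℝ) := by push_cast; ring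
    rw [this] at hxy
    linarith [hcon.1, hcon.2]
  obtain ⟨p, hpU, hpM⟩ : ∃ p, p ∈ U ∧ (M : ℤ) ≤ |p i| := by
    rcases habs with h | h
    · refine ⟨x, hxU, ?_⟩
      have : ((M : ℤ) : ℝ) ≤ ((|x i| : ℤ) : ℝ) := by push_cast; exact h
      exact_mod_cast this
    · refine ⟨y, hyU, ?_⟩
      have : ((M : ℤ) : ℝ) ≤ ((|y i| : ℤ) : ℝ) := by push_cast; exact h
      exact_mod_cast this
  obtain ⟨q, hqU, hqbox⟩ := hUbox
  -- the sup function
  set g : (Fin d → ℤ) → ℤ := fun z => Finset.univ.sup' hFin (fun j => |z j|) with hg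
  have hgq : g q ≤ (M : ℤ) := by
    refine Finset.sup'_le _ _ (fun j _ => ?_)
    exact (hqbox j).trans (by exact_mod_cast hlow)
  have hgp : (M : ℤ) ≤ g p :=
    hpM.trans (Finset.le_sup' (fun j => |p j|) (Finset.mem_univ i))
  obtain ⟨l, hchain, hhead, hlast, hmem⟩ := hUconn q hqU p hpU
  have hchain' : l.Chain' (fun a b => g b ≤ g a + 1) := by
    refine hchain.imp (fun a b hab => ?_)
    refine Finset.sup'_le _ _ (fun j _ => ?_)
    have h1 := GlueAux.nnAdj_coord hab j
    have h2 : |b j| - |a j| ≤ |b j - a j| := abs_sub_abs_le_abs_sub _ _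
    have h3 : |b j - a j| = |a j - b j| := abs_sub_comm _ _
    have h4 : |a j| ≤ g a := Finset.le_sup' (fun j => |a j|) (Finset.mem_univ j)
    omega
  obtain ⟨w, hwl, hwg⟩ := GlueAux.ivt_list g (M : ℤ) l hchain' q p hhead hlast hgq hgp
  have hwU : w ∈ U := hmem w hwl
  have hwsph : w ∈ latSphere d M := by
    constructor
    · intro j
      have : |w j| ≤ g w := Finset.le_sup' (fun j => |w j|) (Finset.mem_univ j)
      omega
    · obtain ⟨j, -, hj⟩ := Finset.exists_mem_eq_sup' hFin (fun j => |w j|)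
      exact ⟨j, by rw [← hj]; exact hwg⟩
  have hql : q ∈ l := by
    cases l with
    | nil => simp at hhead
    | cons a t =>
      simp only [List.head?_cons, Option.some.injEq] at hhead
      simp [hhead]
  constructor
  · exact ⟨U, hUO, hUconn, ⟨q, hqU, hqbox⟩, ⟨w, hwU, hwsph⟩⟩
  · exact ⟨l, hchain, fun z hz => hUO (hmem z hz), ⟨q, hql, hqbox⟩, ⟨w, hwl, hwsph⟩⟩
end
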